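/- arXiv:2210.03959 — 5 statements merged into one kernel-verified Lean document; each statement's English description precedes it below -/
import Mathlib

section
/- Let G be a 3-connected graph and D a connected subgraph of G such that G−V(D) contains an even cycle. If C is an even cycle in G−V(D) chosen so that the component of G−V(C) containing D has maximum number of vertices, then G−V(C) is connected. -/
open SimpleGraph

/-- `G` contains two cycles of consecutive even lengths `2m` and `2m+2`. -/
def HasTwoConsecEvenCycles {V : Type*} (G : SimpleGraph V) : Prop :=
  ∃ (u v : V) (c₁ : G.Walk u u) (c₂ : G.Walk v v) (m : ℕ),
    c₁.IsCycle ∧ c₂.IsCycle ∧ 0 < m ∧ c₁.length = 2 * m ∧ c₂.length = 2 * m + 2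

/-- `G` is `k`-connected: more than `k` vertices, and deleting any set of
fewer than `k` vertices leaves a connected graph. -/
def KConnected {V : Type*} (k : ℕ) (G : SimpleGraph V) : Prop :=
  k + 1 ≤ Nat.card V ∧ ∀ S : Set V, S.ncard < k → (G.induce Sᶜ).Connected

/-- The vertex set of the component of `G - S` containing the vertex `d`
(assuming `d ∉ S`): all vertices reachable from `d` by a walk avoiding `S`. -/
def avoidComp {V : Type*} (G : SimpleGraph V) (d : V) (S : Set V) : Set V :=
  {v : V | ∃ p : G.Walk d v, ∀ w ∈ p.support, w ∉ S}

section Helpers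

open Walk

variable {V : Type*} {G : SimpleGraph V}

lemma walk_of_induce {s : Set V} {a b : s} (w : (G.induce s).Walk a b) :
    ∃ p : G.Walk a.1 b.1, ∀ x ∈ p.support, x ∈ s := by
  refine ⟨w.map (Embedding.induce s).toHom, ?_⟩
  intro x hx
  change x ∈ (w.map (Embedding.induce s).toHom).support at hx
  rw [Walk.support_map] at hx
  obtain ⟨y, _, rfl⟩ := List.mem_map.mp hx
  exact y.2

lemma reachable_induce_of_walk {s : Set V} {a b : V} (p : G.Walk a b)
    (hp : ∀ x ∈ p.support, x ∈ s) (ha : a ∈ s) (hb : b ∈ s) :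
    (G.induce s).Reachable ⟨a, ha⟩ ⟨b, hb⟩ := by
  induction p with
  | nil => exact Reachable.refl _
  | @cons u v w h q ih =>
    have hv : v ∈ s := hp v (by simp)
    have hadj : (G.induce s).Adj ⟨u, ha⟩ ⟨v, hv⟩ := h
    exact hadj.reachable.trans (ih (fun x hx => hp x (by simp [hx])) hv hb)

namespace AvoidComp

lemma not_mem {d v : V} {S : Set V} (h : v ∈ avoidComp G d S) : v ∉ S := by
  obtain ⟨p, hp⟩ := h
  exact hp v p.end_mem_support

lemma self_mem {d : V} {S : Set V} (hd : d ∉ S) : d ∈ avoidComp G d S :=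
  ⟨Walk.nil, by simp [hd]⟩

lemma trans {d v x : V} {S : Set V} (h1 : v ∈ avoidComp G d S)
    (h2 : x ∈ avoidComp G v S) : x ∈ avoidComp G d S := by
  obtain ⟨p, hp⟩ := h1
  obtain ⟨q, hq⟩ := h2
  refine ⟨p.append q, fun w hw => ?_⟩
  rcases (Walk.mem_support_append_iff _ _).mp hw with h | h
  · exact hp w h
  · exact hq w h

lemma symm {d v : V} {S : Set V} (h : v ∈ avoidComp G d S) :
    d ∈ avoidComp G v S := by
  obtain ⟨p, hp⟩ := h
  exact ⟨p.reverse, fun w hw => hp w (by rwa [Walk.support_reverse, List.mem_reverse] at hw)⟩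

lemma adj {d v x : V} {S : Set V} (h : v ∈ avoidComp G d S) (hadj : G.Adj v x)
    (hx : x ∉ S) : x ∈ avoidComp G d S := by
  refine trans h ⟨Walk.cons hadj Walk.nil, ?_⟩
  intro w hw
  simp only [Walk.support_cons, Walk.support_nil, List.mem_cons, List.mem_singleton] at hw
  rcases hw with rfl | rfl | h'
  · exact not_mem h
  · exact hx
  · exact absurd h' (by simp)

lemma good_walk {d v : V} {S : Set V} (h : v ∈ avoidComp G d S) :
    ∃ p : G.Walk d v, ∀ w ∈ p.support, w ∈ avoidComp G d S := by
  classical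
  obtain ⟨p, hp⟩ := h
  refine ⟨p, fun w hw => ⟨p.takeUntil w hw, fun x hx => hp x (p.support_takeUntil_subset hw hx)⟩⟩

lemma stay {d : V} {S T : Set V}
    (hT : ∀ x y, x ∈ avoidComp G d S → G.Adj x y → y ∈ S → y ∈ T) :
    ∀ {a v : V} (p : G.Walk a v), a ∈ avoidComp G d S →
      (∀ x ∈ p.support, x ∉ T) → v ∈ avoidComp G d S := by
  intro a v p
  induction p with
  | nil => exact fun h _ => h
  | @cons u w v h q ih =>
    intro ha hsupp
    have hw : w ∉ S := by
      intro hwS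
      exact hsupp w (by simp) (hT u w ha h hwS)
    exact ih (adj ha h hw) (fun x hx => hsupp x (by simp [hx]))

end AvoidComp

lemma first_hit {S : Set V} :
    ∀ {a b : V} (p : G.Walk a b), b ∈ S →
      ∃ (h : V) (q : G.Walk a h), h ∈ S ∧ (∀ x ∈ q.support, x ∈ S → x = h) ∧
        (∀ x ∈ q.support, x ∈ p.support) := by
  intro a b p
  induction p with
  | nil => exact fun hb => ⟨_, Walk.nil, hb, by simp, by simp⟩
  | @cons u w v h q ih =>
    intro hb
    by_cases hu : u ∈ S
    · exact ⟨u, Walk.nil, hu, by simp, by simp⟩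
    · obtain ⟨h0, q0, hh0, hmeet, hsub⟩ := ih hb
      refine ⟨h0, Walk.cons h q0, hh0, ?_, ?_⟩
      · intro x hx hxS
        simp only [Walk.support_cons, List.mem_cons] at hx
        rcases hx with rfl | hx
        · exact absurd hxS hu
        · exact hmeet x hx hxS
      · intro x hx
        simp only [Walk.support_cons, List.mem_cons] at hx ⊢
        rcases hx with rfl | hx
        · exact Or.inl rfl
        · exact Or.inr (hsub x hx)

variable [DecidableEq V]

lemma path_split {a b w : V} {p : G.Walk a b} (hp : p.IsPath) (hw : w ∈ p.support) :
    (p.takeUntil w hw).IsPath ∧ (p.dropUntil w hw).IsPath ∧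
      (∀ x, x ∈ (p.takeUntil w hw).support → x ∈ (p.dropUntil w hw).support → x = w) := by
  refine ⟨hp.takeUntil hw, hp.dropUntil hw, ?_⟩
  intro x hx1 hx2
  have hspec := p.take_spec hw
  have hnd : (p.support).Nodup := hp.support_nodup
  rw [← hspec, Walk.support_append] at hnd
  have hdisj := List.disjoint_of_nodup_append hnd
  by_contra hxw
  have hx2' : x ∈ (p.dropUntil w hw).support.tail := by
    cases hsup : (p.dropUntil w hw).support with
    | nil => simp [hsup] at hx2
    | cons y t =>
      have : y = w := by
        have := (p.dropUntil w hw).support_eq_cons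
        rw [hsup] at this; exact (List.cons_eq_cons.mp this).1
      rw [hsup] at hx2
      rcases List.mem_cons.mp hx2 with rfl | h
      · exact absurd this hxw
      · simpa [hsup, this]
  exact hdisj hx1 hx2'

lemma cycle_split {x y : V} {c : G.Walk x x} (hc : c.IsCycle) (hy : y ∈ c.support)
    (hxy : y ≠ x) :
    (c.takeUntil y hy).IsPath ∧ (c.dropUntil y hy).IsPath ∧
      (∀ v, v ∈ (c.takeUntil y hy).support → v ∈ (c.dropUntil y hy).support →
        v = x ∨ v = y) := by
  set Q := c.takeUntil y hy with hQ
  set R := c.dropUntil y hy with hR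
  have hspec : Q.append R = c := c.take_spec hy
  have htail : c.support.tail = Q.support.tail ++ R.support.tail := by
    rw [← hspec, Walk.tail_support_append]
  have hnd : (Q.support.tail ++ R.support.tail).Nodup := by
    rw [← htail]; exact hc.support_nodup
  have hdisj := List.disjoint_of_nodup_append hnd
  have hndQ : Q.support.tail.Nodup := hnd.of_append_left
  have hndR : R.support.tail.Nodup := hnd.of_append_right
  have hQcons : Q.support = x :: Q.support.tail := Q.support_eq_cons
  have hRcons : R.support = y :: R.support.tail := R.support_eq_cons
  have hxR : x ∈ R.support.tail := by
    have : x ∈ R.support := R.end_mem_support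
    rw [hRcons] at this
    rcases List.mem_cons.mp this with h | h
    · exact absurd h.symm hxy
    · exact h
  have hyQ : y ∈ Q.support := Q.end_mem_support
  have hQpath : Q.IsPath := by
    refine Walk.IsPath.mk' ?_
    rw [hQcons]
    refine List.Nodup.cons ?_ hndQ
    intro hxQ
    exact hdisj hxQ hxR
  have hRpath : R.IsPath := by
    refine Walk.IsPath.mk' ?_
    rw [hRcons]
    refine List.Nodup.cons ?_ hndR
    intro hyR
    have hyQt : y ∈ Q.support.tail := by
      rw [hQcons] at hyQ
      rcases List.mem_cons.mp hyQ with h | h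
      · exact absurd h hxy
      · exact h
    exact hdisj hyQt hyR
  refine ⟨hQpath, hRpath, ?_⟩
  intro v hvQ hvR
  by_contra hne
  push_neg at hne
  have hvQt : v ∈ Q.support.tail := by
    rw [hQcons] at hvQ
    rcases List.mem_cons.mp hvQ with h | h
    · exact absurd h hne.1
    · exact h
  have hvRt : v ∈ R.support.tail := by
    rw [hRcons] at hvR
    rcases List.mem_cons.mp hvR with h | h
    · exact absurd h hne.2
    · exact h
  exact hdisj hvQt hvRt

omit [DecidableEq V] in
lemma isPath_append' {a b c : V} {p : G.Walk a b} {q : G.Walk b c}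
    (hp : p.IsPath) (hq : q.IsPath)
    (h : ∀ x, x ∈ p.support → x ∈ q.support → x = b) : (p.append q).IsPath := by
  have hqt : q.support.tail.Nodup := by
    have := hq.support_nodup
    rw [q.support_eq_cons] at this
    exact this.of_cons
  have hbq : b ∉ q.support.tail := by
    have := hq.support_nodup
    rw [q.support_eq_cons] at this
    exact (List.nodup_cons.mp this).1
  refine Walk.IsPath.mk' ?_
  rw [Walk.support_append]
  refine List.Nodup.append hp.support_nodup hqt ?_
  intro x hxp hxq
  have hxq' : x ∈ q.support := by rw [q.support_eq_cons]; exact List.mem_cons_of_mem _ hxq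
  have := h x hxp hxq'
  subst this
  exact hbq hxq

omit [DecidableEq V] in
/-- In a path from `a` to `b`, if the edge `s(a,b)` occurs, the path has length 1. -/
lemma edge_ends_of_path {a b : V} {p : G.Walk a b} (hp : p.IsPath)
    (he : s(a, b) ∈ p.edges) : p.length = 1 := by
  cases p with
  | nil => simp at he
  | @cons u w v h q =>
    rw [Walk.edges_cons, List.mem_cons] at he
    rcases he with he | he
    · have hab : a ≠ b := by
        intro hab; subst hab
        rw [Walk.isPath_iff_eq_nil] at hp
        simp at hp
      have hwb : w = b := by
        rw [Sym2.eq_iff] at he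
        rcases he with ⟨-, h2⟩ | ⟨-, h2⟩
        · exact h2.symm
        · exact absurd h2.symm hab
      subst hwb
      have : q = Walk.nil := (Walk.isPath_iff_eq_nil (p := q)).mp (Walk.cons_isPath_iff h q |>.mp hp).1
      rw [this]; simp
    · have haq : a ∉ q.support := ((Walk.cons_isPath_iff h q).mp hp).2
      exact absurd (q.fst_mem_support_of_mem_edges he) haq

omit [DecidableEq V] in
lemma edge_of_length_one {a b : V} {p : G.Walk a b} (h : p.length = 1) :
    s(a, b) ∈ p.edges := by
  cases p with
  | nil => simp at h
  | @cons u w v hadj q =>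
    have h0 : q.length = 0 := by
      have := h; simp only [Walk.length_cons] at this; omega
    have hq : q.Nil := Walk.nil_iff_length_eq.mpr h0
    have hvb := hq.eq
    subst hvb
    simp

omit [DecidableEq V] in
/-- Gluing a path `P` (interior meeting `S` only in the endpoints) with a path `S`
back to the start gives a cycle, provided `P` has length at least 2. -/
lemma isCycle_glue {y z : V} {P : G.Walk y z} {S : G.Walk z y}
    (hP : P.IsPath) (hS : S.IsPath) (hlen : 2 ≤ P.length)
    (hint : ∀ x, x ∈ P.support → x ∈ S.support → x = y ∨ x = z) :
    (P.append S).IsCycle := by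
  have hyz : y ≠ z := by
    intro h; subst h
    rw [Walk.isPath_iff_eq_nil] at hP
    subst hP; simp at hlen
  have hyP : y ∉ P.support.tail := by
    have := hP.support_nodup
    rw [P.support_eq_cons] at this
    exact (List.nodup_cons.mp this).1
  have hzS : z ∉ S.support.tail := by
    have := hS.support_nodup
    rw [S.support_eq_cons] at this
    exact (List.nodup_cons.mp this).1
  have hPt : P.support.tail.Nodup := by
    have := hP.support_nodup
    rw [P.support_eq_cons] at this
    exact this.of_cons
  have hSt : S.support.tail.Nodup := by
    have := hS.support_nodup
    rw [S.support_eq_cons] at this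
    exact this.of_cons
  have hdisj : P.support.tail.Disjoint S.support.tail := by
    intro x hx1 hx2
    have hx1' : x ∈ P.support := by rw [P.support_eq_cons]; exact List.mem_cons_of_mem _ hx1
    have hx2' : x ∈ S.support := by rw [S.support_eq_cons]; exact List.mem_cons_of_mem _ hx2
    rcases hint x hx1' hx2' with rfl | rfl
    · exact hyP hx1
    · exact hzS hx2
  have hedge : ∀ e ∈ P.edges, e ∉ S.edges := by
    intro e heP heS
    induction e with
    | h x1 x2 =>
      have h1P := P.fst_mem_support_of_mem_edges heP
      have h2P := P.snd_mem_support_of_mem_edges heP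
      have h1S := S.fst_mem_support_of_mem_edges heS
      have h2S := S.snd_mem_support_of_mem_edges heS
      have hne : x1 ≠ x2 := by
        have : G.Adj x1 x2 := P.adj_of_mem_edges heP
        exact this.ne
      have h1 := hint x1 h1P h1S
      have h2 := hint x2 h2P h2S
      have : s(x1, x2) = s(y, z) := by
        rcases h1 with rfl | rfl <;> rcases h2 with rfl | rfl
        · exact absurd rfl hne
        · rfl
        · exact Sym2.eq_swap
        · exact absurd rfl hne
      rw [this] at heP
      have := edge_ends_of_path hP heP
      omega
  constructor
  · constructor
    · constructor
      rw [Walk.edges_append]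
      refine List.Nodup.append hP.edges_nodup hS.edges_nodup ?_
      intro e he1 he2
      exact hedge e he1 he2
    · intro hnil
      have : P.length + S.length = 0 := by
        have := congr_arg Walk.length hnil
        rwa [Walk.length_append] at this
      omega
  · rw [Walk.tail_support_append]
    exact List.Nodup.append hPt hSt hdisj

omit [DecidableEq V] in
lemma mem_support_closed_iff_tail {u : V} {p : G.Walk u u} (hp : ¬p.Nil) (v : V) :
    v ∈ p.support ↔ v ∈ p.support.tail := by
  cases p with
  | nil => simp at hp
  | @cons _ w _ h q =>
    simp only [Walk.support_cons, List.tail_cons, List.mem_cons]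
    constructor
    · rintro (rfl | h')
      · exact q.end_mem_support
      · exact h'
    · exact fun h' => Or.inr h'

lemma mem_support_rotate {x u : V} {c : G.Walk u u} (hnil : ¬c.Nil) (h : x ∈ c.support)
    (hnil' : ¬(c.rotate x h).Nil) (v : V) :
    v ∈ (c.rotate x h).support ↔ v ∈ c.support := by
  rw [mem_support_closed_iff_tail hnil' v, mem_support_closed_iff_tail hnil v]
  exact (Walk.support_rotate c x h).mem_iff

lemma length_rotate {x u : V} {c : G.Walk u u} (h : x ∈ c.support) :
    (c.rotate x h).length = c.length := by
  exact Walk.length_rotate c x h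

end Helpers

/-- If `G` is 3-connected, `D` a connected subgraph with an even cycle in `G - V(D)`,
and `C` is an even cycle of `G - V(D)` maximizing the order of the component of
`G - V(C)` containing `D`, then `G - V(C)` is connected. -/
theorem stmt_3 {V : Type*} [Fintype V] (G : SimpleGraph V) (h3 : KConnected 3 G)
    (D : Set V) (hDconn : (G.induce D).Connected) (d : V) (hd : d ∈ D)
    (u : V) (c : G.Walk u u) (hc : c.IsCycle) (hce : Even c.length)
    (hcD : ∀ v ∈ c.support, v ∉ D)
    (hmax : ∀ (u' : V) (c' : G.Walk u' u'), c'.IsCycle → Even c'.length →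
      (∀ v ∈ c'.support, v ∉ D) →
      (avoidComp G d {v : V | v ∈ c'.support}).ncard ≤
        (avoidComp G d {v : V | v ∈ c.support}).ncard) :
    (G.induce {v : V | v ∉ c.support}).Connected := by
  classical
  set VC : Set V := {v : V | v ∈ c.support} with hVCdef
  set A : Set V := avoidComp G d VC with hAdef
  have hdVC : d ∉ VC := fun h => hcD d h hd
  have hdA : d ∈ A := AvoidComp.self_mem hdVC
  have hAVC : ∀ x ∈ A, x ∉ VC := fun x hx => AvoidComp.not_mem hx
  have hDA : D ⊆ A := by
    intro v hv
    obtain ⟨w⟩ := hDconn.preconnected ⟨d, hd⟩ ⟨v, hv⟩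
    obtain ⟨p, hp⟩ := walk_of_induce w
    exact ⟨p, fun x hx hxC => hcD x hxC (hp x hx)⟩
  by_contra hncon
  -- there is a vertex outside the cycle not in the component of `d`
  have hbex : ∃ b, b ∉ VC ∧ b ∉ A := by
    by_contra hno
    push_neg at hno
    apply hncon
    rw [SimpleGraph.connected_iff]
    refine ⟨?_, ⟨⟨d, hdVC⟩⟩⟩
    rintro ⟨x, hx⟩ ⟨y, hy⟩
    have hxVC : x ∉ VC := hx
    have hyVC : y ∉ VC := hy
    obtain ⟨px, hpx⟩ := AvoidComp.good_walk (hno x hxVC)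
    obtain ⟨py, hpy⟩ := AvoidComp.good_walk (hno y hyVC)
    have hwalk : ∀ w ∈ (px.reverse.append py).support, w ∈ {v : V | v ∉ c.support} := by
      intro w hw
      rcases (SimpleGraph.Walk.mem_support_append_iff _ _).mp hw with h | h
      · rw [SimpleGraph.Walk.support_reverse, List.mem_reverse] at h
        exact hAVC w (hpx w h)
      · exact hAVC w (hpy w h)
    exact reachable_induce_of_walk (px.reverse.append py) hwalk hx hy
  obtain ⟨b, hbVC, hbA⟩ := hbex
  set B : Set V := avoidComp G b VC with hBdef
  have hbB : b ∈ B := AvoidComp.self_mem hbVC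
  have hAB : ∀ x, x ∈ A → x ∈ B → False := fun x hxA hxB =>
    hbA (AvoidComp.trans hxA (AvoidComp.symm hxB))
  have hBVC : ∀ x ∈ B, x ∉ VC := fun x hx => AvoidComp.not_mem hx
  have hBD : ∀ x ∈ B, x ∉ D := fun x hx hxD => hAB x (hDA hxD) hx
  -- the attachment sets of both components have at least 3 vertices
  have attach3 : ∀ r z : V, r ∉ VC → z ∉ VC → z ∉ avoidComp G r VC →
      3 ≤ {x | x ∈ VC ∧ ∃ a ∈ avoidComp G r VC, G.Adj a x}.ncard := by
    intro r z hr hz hzr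
    by_contra hlt
    push_neg at hlt
    set T : Set V := {x | x ∈ VC ∧ ∃ a ∈ avoidComp G r VC, G.Adj a x} with hTdef
    have hcon := h3.2 T hlt
    have hrT : r ∈ Tᶜ := fun h => hr h.1
    have hzT : z ∈ Tᶜ := fun h => hz h.1
    obtain ⟨w⟩ := hcon.preconnected ⟨r, hrT⟩ ⟨z, hzT⟩
    obtain ⟨p, hp⟩ := walk_of_induce w
    refine hzr (AvoidComp.stay (T := T) ?_ p (AvoidComp.self_mem hr) ?_)
    · intro x y hx hxy hyVC
      exact ⟨hyVC, x, hx, hxy⟩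
    · intro x hx
      exact hp x hx
  set TA : Set V := {x | x ∈ VC ∧ ∃ a ∈ A, G.Adj a x} with hTAdef
  set TB : Set V := {x | x ∈ VC ∧ ∃ a ∈ B, G.Adj a x} with hTBdef
  have hTA3 : 3 ≤ TA.ncard := attach3 d b hdVC hbVC hbA
  have hTB3 : 3 ≤ TB.ncard := attach3 b d hbVC hdVC (fun h => hbA (AvoidComp.symm h))
  -- three attachment vertices of the component of `d`
  obtain ⟨TA', hTA'sub, hTA'card⟩ := Set.exists_subset_card_eq hTA3
  obtain ⟨a1, a2, a3, ha12, ha13, ha23, hTA'eq⟩ := Set.ncard_eq_three.mp hTA'card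
  have ha1 : a1 ∈ TA := hTA'sub (by rw [hTA'eq]; simp)
  have ha2 : a2 ∈ TA := hTA'sub (by rw [hTA'eq]; simp)
  have ha3 : a3 ∈ TA := hTA'sub (by rw [hTA'eq]; simp)
  have hmsel : ∀ y z : V, ∃ m, m ∈ TA ∧ m ≠ y ∧ m ≠ z := by
    intro y z
    by_cases h1 : a1 ≠ y ∧ a1 ≠ z
    · exact ⟨a1, ha1, h1⟩
    by_cases h2 : a2 ≠ y ∧ a2 ≠ z
    · exact ⟨a2, ha2, h2⟩
    by_cases h3' : a3 ≠ y ∧ a3 ≠ z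
    · exact ⟨a3, ha3, h3'⟩
    exfalso
    push_neg at h1 h2 h3'
    by_cases e1 : a1 = y
    · by_cases e2 : a2 = y
      · exact ha12 (e1.trans e2.symm)
      · have e2' : a2 = z := h2 e2
        by_cases e3 : a3 = y
        · exact ha13 (e1.trans e3.symm)
        · exact ha23 (e2'.trans (h3' e3).symm)
    · have e1' : a1 = z := h1 e1
      by_cases e2 : a2 = z
      · exact ha12 (e1'.trans e2.symm)
      · have e2' : a2 = y := by
          rcases eq_or_ne a2 y with h | h
          · exact h
          · exact absurd (h2 h) e2
        by_cases e3 : a3 = z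
        · exact ha13 (e1'.trans e3.symm)
        · have e3' : a3 = y := by
            rcases eq_or_ne a3 y with h | h
            · exact h
            · exact absurd (h3' h) e3
          exact ha23 (e2'.trans e3'.symm)
  -- the key step: given a suitable replacement cycle we get a contradiction
  have KEY : ∀ (y z : V), y ∈ VC → z ∈ VC →
      ∀ (P : G.Walk y z), P.IsPath → 2 ≤ P.length →
      (∀ x ∈ P.support, x = y ∨ x = z ∨ x ∈ B) →
      ∀ (K : G.Walk z y), K.IsPath → (∀ x ∈ K.support, x ∈ VC) →
      Even (P.length + K.length) →
      ∀ m, m ∈ TA → m ≠ y → m ≠ z → m ∉ K.support → False := by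
    intro y z hy hz P hPp hPl hPs K hKp hKs hpar m hmTA hmy hmz hmK
    have hint : ∀ x, x ∈ P.support → x ∈ K.support → x = y ∨ x = z := by
      intro x hxP hxK
      rcases hPs x hxP with h | h | h
      · exact Or.inl h
      · exact Or.inr h
      · exact absurd (hKs x hxK) (hBVC x h)
    have hcyc := isCycle_glue hPp hKp hPl hint
    have hc'supp : ∀ x ∈ (P.append K).support, x ∈ VC ∨ x ∈ B := by
      intro x hx
      rcases (SimpleGraph.Walk.mem_support_append_iff _ _).mp hx with h | h
      · rcases hPs x h with rfl | rfl | h'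
        · exact Or.inl hy
        · exact Or.inl hz
        · exact Or.inr h'
      · exact Or.inl (hKs x h)
    have hc'D : ∀ v ∈ (P.append K).support, v ∉ D := by
      intro v hv hvD
      rcases hc'supp v hv with h | h
      · exact hcD v h hvD
      · exact hBD v h hvD
    have hc'even : Even (P.append K).length := by
      rw [SimpleGraph.Walk.length_append]; exact hpar
    have hgood : ∀ v ∈ A, v ∈ avoidComp G d {x : V | x ∈ (P.append K).support} := by
      intro v hv
      obtain ⟨p, hp⟩ := AvoidComp.good_walk hv
      refine ⟨p, fun w hw hwS => ?_⟩
      have hwA := hp w hw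
      rcases hc'supp w hwS with h | h
      · exact hAVC w hwA h
      · exact hAB w hwA h
    have hmA' : m ∈ avoidComp G d {x : V | x ∈ (P.append K).support} := by
      obtain ⟨hmVC, a, haA, hadj⟩ := hmTA
      have hmc' : m ∉ {x : V | x ∈ (P.append K).support} := by
        intro hm
        rcases (SimpleGraph.Walk.mem_support_append_iff _ _).mp hm with h | h
        · rcases hPs m h with h' | h' | h'
          · exact hmy h'
          · exact hmz h'
          · exact hBVC m h' hmVC
        · exact hmK h
      obtain ⟨p, hp⟩ := AvoidComp.good_walk haA
      refine ⟨p.concat hadj, fun w hw => ?_⟩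
      rw [SimpleGraph.Walk.support_concat, List.mem_append] at hw
      rcases hw with hw | hw
      · intro hwS
        have hwA := hp w hw
        rcases hc'supp w hwS with h | h
        · exact hAVC w hwA h
        · exact hAB w hwA h
      · rw [List.mem_singleton] at hw
        subst hw
        exact hmc'
    have hmA : m ∉ A := fun h => hAVC m h hmTA.1
    have hss : A ⊂ avoidComp G d {x : V | x ∈ (P.append K).support} := by
      constructor
      · exact fun v hv => hgood v hv
      · intro hsub
        exact hmA (hsub hmA')
    have hlt : A.ncard < (avoidComp G d {x : V | x ∈ (P.append K).support}).ncard :=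
      Set.ncard_lt_ncard hss (Set.toFinite _)
    have := hmax y (P.append K) hcyc hc'even hc'D
    omega
  -- three attachment vertices of `B`
  obtain ⟨TB', hTB'sub, hTB'card⟩ := Set.exists_subset_card_eq hTB3
  obtain ⟨x1, x2, x3, hx12, hx13, hx23, hTB'eq⟩ := Set.ncard_eq_three.mp hTB'card
  have hx1 : x1 ∈ TB := hTB'sub (by rw [hTB'eq]; simp)
  have hx2 : x2 ∈ TB := hTB'sub (by rw [hTB'eq]; simp)
  have hx3 : x3 ∈ TB := hTB'sub (by rw [hTB'eq]; simp)
  have hx1VC : x1 ∈ VC := hx1.1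
  have hx2VC : x2 ∈ VC := hx2.1
  have hx3VC : x3 ∈ VC := hx3.1
  -- the pair-lemma: two even replacement cycles through a pair of attachments of `B`
  have PAIR : ∀ (y z : V), y ∈ VC → z ∈ VC →
      ∀ (P : G.Walk y z), P.IsPath → 2 ≤ P.length →
      (∀ x ∈ P.support, x = y ∨ x = z ∨ x ∈ B) →
      ∀ (A1 : G.Walk y z) (A2 : G.Walk z y), A1.IsPath → A2.IsPath →
      (∀ x ∈ A1.support, x ∈ VC) → (∀ x ∈ A2.support, x ∈ VC) →
      (∀ x, x ∈ A1.support → x ∈ A2.support → x = y ∨ x = z) →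
      Even (P.length + A1.length) → Even (P.length + A2.length) → False := by
    intro y z hy hz P hPp hPl hPs A1 A2 h1p h2p h1s h2s hint12 hpar1 hpar2
    obtain ⟨m, hmTA, hmy, hmz⟩ := hmsel y z
    by_cases hm1 : m ∈ A1.support
    · have hm2 : m ∉ A2.support := fun h => by
        rcases hint12 m hm1 h with h' | h'
        · exact hmy h'
        · exact hmz h'
      exact KEY y z hy hz P hPp hPl hPs A2 h2p h2s hpar2 m hmTA hmy hmz hm2
    · refine KEY y z hy hz P hPp hPl hPs A1.reverse h1p.reverse ?_ ?_ m hmTA hmy hmz ?_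
      · intro x hx
        rw [SimpleGraph.Walk.support_reverse, List.mem_reverse] at hx
        exact h1s x hx
      · rw [SimpleGraph.Walk.length_reverse]; exact hpar1
      · rw [SimpleGraph.Walk.support_reverse, List.mem_reverse]; exact hm1
  -- rotate the cycle to start at `x1` and cut it into three segments
  have hcnil : ¬c.Nil := by
    intro h
    exact hc.ne_nil (SimpleGraph.Walk.nil_iff_eq_nil.mp h)
  have hx1c : x1 ∈ c.support := hx1VC
  have hc1 : (c.rotate x1 hx1c).IsCycle := hc.rotate hx1c
  have hc1nil : ¬(c.rotate x1 hx1c).Nil := by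
    intro h
    exact hc1.ne_nil (SimpleGraph.Walk.nil_iff_eq_nil.mp h)
  have hmem1 : ∀ v, v ∈ (c.rotate x1 hx1c).support ↔ v ∈ c.support :=
    mem_support_rotate hcnil hx1c hc1nil
  have hlen1 : (c.rotate x1 hx1c).length = c.length := length_rotate hx1c
  have hx2c1 : x2 ∈ (c.rotate x1 hx1c).support := (hmem1 x2).2 hx2VC
  obtain ⟨hQp, hRp, hQR⟩ := cycle_split hc1 hx2c1 hx12.symm
  have hspecQR := (c.rotate x1 hx1c).take_spec hx2c1
  have hx3c1 : x3 ∈ (c.rotate x1 hx1c).support := (hmem1 x3).2 hx3VC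
  have hx3QR : x3 ∈ ((c.rotate x1 hx1c).takeUntil x2 hx2c1).support ∨
      x3 ∈ ((c.rotate x1 hx1c).dropUntil x2 hx2c1).support := by
    rw [← hspecQR] at hx3c1
    exact (SimpleGraph.Walk.mem_support_append_iff _ _).mp hx3c1
  have hlenQR : ((c.rotate x1 hx1c).takeUntil x2 hx2c1).length +
      ((c.rotate x1 hx1c).dropUntil x2 hx2c1).length = c.length := by
    have := congr_arg SimpleGraph.Walk.length hspecQR
    rw [SimpleGraph.Walk.length_append] at this
    omega
  have hseg : ∃ (xa xb : V) (W1 : G.Walk x1 xa) (W2 : G.Walk xa xb) (W3 : G.Walk xb x1),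
      xa ∈ TB ∧ xb ∈ TB ∧ x1 ≠ xa ∧ x1 ≠ xb ∧ xa ≠ xb ∧
      W1.IsPath ∧ W2.IsPath ∧ W3.IsPath ∧
      (∀ v, v ∈ W1.support → v ∈ W2.support → v = xa) ∧
      (∀ v, v ∈ W2.support → v ∈ W3.support → v = xb) ∧
      (∀ v, v ∈ W1.support → v ∈ W3.support → v = x1) ∧
      (∀ v ∈ W1.support, v ∈ c.support) ∧ (∀ v ∈ W2.support, v ∈ c.support) ∧
      (∀ v ∈ W3.support, v ∈ c.support) ∧
      (∀ v ∈ c.support, v ∈ W1.support ∨ v ∈ W2.support ∨ v ∈ W3.support) ∧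
      W1.length + W2.length + W3.length = c.length := by
    set Q := (c.rotate x1 hx1c).takeUntil x2 hx2c1 with hQdef
    set R := (c.rotate x1 hx1c).dropUntil x2 hx2c1 with hRdef
    have hQsub : ∀ v ∈ Q.support, v ∈ c.support := fun v hv =>
      (hmem1 v).1 ((c.rotate x1 hx1c).support_takeUntil_subset hx2c1 hv)
    have hRsub : ∀ v ∈ R.support, v ∈ c.support := fun v hv =>
      (hmem1 v).1 ((c.rotate x1 hx1c).support_dropUntil_subset hx2c1 hv)
    rcases hx3QR with hx3Q | hx3R
    · -- `x3` lies on the segment x1 → x2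
      obtain ⟨hQ1p, hQ2p, hQ12⟩ := path_split hQp hx3Q
      have hQspec := Q.take_spec hx3Q
      have hQlen : (Q.takeUntil x3 hx3Q).length + (Q.dropUntil x3 hx3Q).length = Q.length := by
        have := congr_arg SimpleGraph.Walk.length hQspec
        rw [SimpleGraph.Walk.length_append] at this
        omega
      refine ⟨x3, x2, Q.takeUntil x3 hx3Q, Q.dropUntil x3 hx3Q, R, hx3, hx2, hx13, hx12,
        hx23.symm, hQ1p, hQ2p, hRp, hQ12, ?_, ?_, ?_, ?_, hRsub, ?_, ?_⟩
      · intro v hv2 hvR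
        rcases hQR v (Q.support_dropUntil_subset hx3Q hv2) hvR with h | h
        · exfalso
          have : x1 ∈ (Q.takeUntil x3 hx3Q).support := h ▸ (Q.takeUntil x3 hx3Q).start_mem_support
          have := hQ12 x1 this (h ▸ hv2)
          exact hx13 this
        · exact h
      · intro v hv1 hvR
        rcases hQR v (Q.support_takeUntil_subset hx3Q hv1) hvR with h | h
        · exact h
        · exfalso
          have : x2 ∈ (Q.dropUntil x3 hx3Q).support := h ▸ (Q.dropUntil x3 hx3Q).end_mem_support
          have := hQ12 x2 (h ▸ hv1) this
          exact hx23 this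
      · exact fun v hv => hQsub v (Q.support_takeUntil_subset hx3Q hv)
      · exact fun v hv => hQsub v (Q.support_dropUntil_subset hx3Q hv)
      · intro v hv
        have : v ∈ (c.rotate x1 hx1c).support := (hmem1 v).2 hv
        rw [← hspecQR] at this
        rcases (SimpleGraph.Walk.mem_support_append_iff _ _).mp this with h | h
        · rw [← hQspec] at h
          rcases (SimpleGraph.Walk.mem_support_append_iff _ _).mp h with h' | h'
          · exact Or.inl h'
          · exact Or.inr (Or.inl h')
        · exact Or.inr (Or.inr h)
      · omega
    · -- `x3` lies on the segment x2 → x1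
      obtain ⟨hR1p, hR2p, hR12⟩ := path_split hRp hx3R
      have hRspec := R.take_spec hx3R
      have hRlen : (R.takeUntil x3 hx3R).length + (R.dropUntil x3 hx3R).length = R.length := by
        have := congr_arg SimpleGraph.Walk.length hRspec
        rw [SimpleGraph.Walk.length_append] at this
        omega
      refine ⟨x2, x3, Q, R.takeUntil x3 hx3R, R.dropUntil x3 hx3R, hx2, hx3, hx12, hx13,
        hx23, hQp, hR1p, hR2p, ?_, hR12, ?_, hQsub, ?_, ?_, ?_, ?_⟩
      · intro v hvQ hv1
        rcases hQR v hvQ (R.support_takeUntil_subset hx3R hv1) with h | h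
        · exfalso
          have : x1 ∈ (R.dropUntil x3 hx3R).support := h ▸ (R.dropUntil x3 hx3R).end_mem_support
          have := hR12 x1 (h ▸ hv1) this
          exact hx13 this
        · exact h
      · intro v hvQ hv2
        rcases hQR v hvQ (R.support_dropUntil_subset hx3R hv2) with h | h
        · exact h
        · exfalso
          have : x2 ∈ (R.takeUntil x3 hx3R).support := h ▸ (R.takeUntil x3 hx3R).start_mem_support
          have := hR12 x2 this (h ▸ hv2)
          exact hx23 this
      · exact fun v hv => hRsub v (R.support_takeUntil_subset hx3R hv)
      · exact fun v hv => hRsub v (R.support_dropUntil_subset hx3R hv)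
      · intro v hv
        have : v ∈ (c.rotate x1 hx1c).support := (hmem1 v).2 hv
        rw [← hspecQR] at this
        rcases (SimpleGraph.Walk.mem_support_append_iff _ _).mp this with h | h
        · exact Or.inl h
        · rw [← hRspec] at h
          rcases (SimpleGraph.Walk.mem_support_append_iff _ _).mp h with h' | h'
          · exact Or.inr (Or.inl h')
          · exact Or.inr (Or.inr h')
      · omega
  obtain ⟨xa, xb, W1, W2, W3, hxaTB, hxbTB, h1a, h1b, hab, hW1p, hW2p, hW3p,
    hI12, hI23, hI13, hS1, hS2, hS3, hUnion, hLen⟩ := hseg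
  -- build the tripod in `B` joining x1, xa, xb
  have hBwalk : ∀ p q : V, p ∈ B → q ∈ B → ∃ w : G.Walk p q, ∀ x ∈ w.support, x ∈ B := by
    intro p q hp hq
    obtain ⟨wp, hwp⟩ := AvoidComp.good_walk hp
    obtain ⟨wq, hwq⟩ := AvoidComp.good_walk hq
    refine ⟨wp.reverse.append wq, fun x hx => ?_⟩
    rcases (SimpleGraph.Walk.mem_support_append_iff _ _).mp hx with h | h
    · rw [SimpleGraph.Walk.support_reverse, List.mem_reverse] at h
      exact hwp x h
    · exact hwq x h
  obtain ⟨-, b1, hb1B, hadj1⟩ := hx1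
  obtain ⟨hxaVC, ba, hbaB, hadja⟩ := hxaTB
  obtain ⟨hxbVC, bb, hbbB, hadjb⟩ := hxbTB
  obtain ⟨w0, hw0⟩ := hBwalk b1 ba hb1B hbaB
  have hwfulls : ∀ v ∈ (SimpleGraph.Walk.cons hadj1.symm (w0.concat hadja)).support,
      v = x1 ∨ v = xa ∨ v ∈ B := by
    intro v hv
    simp only [SimpleGraph.Walk.support_cons, List.mem_cons] at hv
    rcases hv with rfl | hv
    · exact Or.inl rfl
    · rw [SimpleGraph.Walk.support_concat, List.mem_append] at hv
      rcases hv with hv | hv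
      · exact Or.inr (Or.inr (hw0 v hv))
      · exact Or.inr (Or.inl (List.mem_singleton.mp hv))
  have hedge_nf : s(x1, xa) ∉ (SimpleGraph.Walk.cons hadj1.symm (w0.concat hadja)).edges := by
    intro he
    simp only [SimpleGraph.Walk.edges_cons, List.mem_cons] at he
    rcases he with he | he
    · rw [Sym2.eq_iff] at he
      rcases he with ⟨-, h2⟩ | ⟨h1', -⟩
      · exact hBVC xa (h2 ▸ hb1B) hxaVC
      · exact hBVC x1 (h1' ▸ hb1B) hx1VC
    · rw [SimpleGraph.Walk.edges_concat, List.concat_eq_append, List.mem_append] at he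
      rcases he with he | he
      · exact hBVC x1 (hw0 x1 (w0.fst_mem_support_of_mem_edges he)) hx1VC
      · rw [List.mem_singleton, Sym2.eq_iff] at he
        rcases he with ⟨h1', -⟩ | ⟨h1', -⟩
        · exact hBVC x1 (h1' ▸ hbaB) hx1VC
        · exact h1a h1'
  have hP0ex : ∃ P0 : G.Walk x1 xa, P0.IsPath ∧
      (∀ v ∈ P0.support, v = x1 ∨ v = xa ∨ v ∈ B) ∧ 2 ≤ P0.length := by
    refine ⟨(SimpleGraph.Walk.cons hadj1.symm (w0.concat hadja)).bypass,
      SimpleGraph.Walk.bypass_isPath _,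
      fun v hv => hwfulls v (SimpleGraph.Walk.support_bypass_subset _ hv), ?_⟩
    by_contra hlt
    push_neg at hlt
    interval_cases h : (SimpleGraph.Walk.cons hadj1.symm (w0.concat hadja)).bypass.length
    · have : (SimpleGraph.Walk.cons hadj1.symm (w0.concat hadja)).bypass.Nil :=
        SimpleGraph.Walk.nil_iff_length_eq.mpr h
      exact h1a this.eq
    · exact hedge_nf (SimpleGraph.Walk.edges_bypass_subset _ (edge_of_length_one h))
  obtain ⟨P0, hP0p, hP0s, hP0len⟩ := hP0ex
  obtain ⟨v2, hadjv2, P0', hP0'eq⟩ := SimpleGraph.Walk.exists_eq_cons_of_ne h1a P0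
  have hv2P0 : v2 ∈ P0.support := by
    rw [hP0'eq]
    simp only [SimpleGraph.Walk.support_cons, List.mem_cons]
    exact Or.inr P0'.start_mem_support
  have hv2B : v2 ∈ B := by
    rcases hP0s v2 hv2P0 with h | h | h
    · exfalso
      have hP0p' := hP0p
      rw [hP0'eq, SimpleGraph.Walk.cons_isPath_iff] at hP0p'
      exact hP0p'.2 (h ▸ P0'.start_mem_support)
    · exfalso
      subst h
      have hP0p' := hP0p
      rw [hP0'eq, SimpleGraph.Walk.cons_isPath_iff] at hP0p'
      have : P0' = SimpleGraph.Walk.nil := (SimpleGraph.Walk.isPath_iff_eq_nil (p := _)).mp hP0p'.1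
      rw [hP0'eq, this] at hP0len
      simp at hP0len
    · exact h
  obtain ⟨w3b, hw3b⟩ := hBwalk bb v2 hbbB hv2B
  have hw3s : ∀ v ∈ (SimpleGraph.Walk.cons hadjb.symm w3b).support, v = xb ∨ v ∈ B := by
    intro v hv
    simp only [SimpleGraph.Walk.support_cons, List.mem_cons] at hv
    rcases hv with rfl | hv
    · exact Or.inl rfl
    · exact Or.inr (hw3b v hv)
  obtain ⟨h0, q0, hh0P0, hq0meet, hq0sub⟩ :=
    first_hit (S := {x : V | x ∈ P0.support}) (SimpleGraph.Walk.cons hadjb.symm w3b) hv2P0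
  have hh0P0' : h0 ∈ P0.support := hh0P0
  have hq1ex : ∃ q1 : G.Walk xb h0, q1.IsPath ∧
      (∀ x ∈ q1.support, x ∈ P0.support → x = h0) ∧
      (∀ v ∈ q1.support, v = xb ∨ v ∈ B) := by
    refine ⟨q0.bypass, SimpleGraph.Walk.bypass_isPath _, ?_, ?_⟩
    · exact fun x hx hxP => hq0meet x (SimpleGraph.Walk.support_bypass_subset _ hx) hxP
    · exact fun v hv => hw3s v (hq0sub v (SimpleGraph.Walk.support_bypass_subset _ hv))
  obtain ⟨q1, hq1p, hq1meet, hq1s⟩ := hq1ex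
  have hxbP0 : xb ∉ P0.support := by
    intro h
    rcases hP0s xb h with h' | h' | h'
    · exact h1b h'.symm
    · exact hab h'.symm
    · exact hBVC xb h' hxbVC
  have hh0B : h0 ∈ B := by
    rcases hw3s h0 (hq0sub h0 q0.end_mem_support) with h | h
    · exact absurd hh0P0' (h ▸ hxbP0)
    · exact h
  have hEex : ∃ (E1 : G.Walk x1 h0) (E2 : G.Walk h0 xa), E1.IsPath ∧ E2.IsPath ∧
      (∀ v, v ∈ E1.support → v ∈ E2.support → v = h0) ∧
      (∀ v ∈ E1.support, v ∈ P0.support) ∧ (∀ v ∈ E2.support, v ∈ P0.support) ∧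
      E1.length + E2.length = P0.length := by
    obtain ⟨hh1, hh2, hh3⟩ := path_split hP0p hh0P0'
    refine ⟨P0.takeUntil h0 hh0P0', P0.dropUntil h0 hh0P0', hh1, hh2, hh3,
      fun v hv => P0.support_takeUntil_subset hh0P0' hv,
      fun v hv => P0.support_dropUntil_subset hh0P0' hv, ?_⟩
    have := congr_arg SimpleGraph.Walk.length (P0.take_spec hh0P0')
    rw [SimpleGraph.Walk.length_append] at this
    omega
  obtain ⟨E1, E2, hE1p, hE2p, hE12, hE1sub, hE2sub, hE12len⟩ := hEex
  have hE1s : ∀ v ∈ E1.support, v = x1 ∨ v ∈ B := by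
    intro v hv
    rcases hP0s v (hE1sub v hv) with h | h | h
    · exact Or.inl h
    · exfalso
      subst h
      have := hE12 v hv E2.end_mem_support
      exact hBVC v (this ▸ hh0B) hxaVC
    · exact Or.inr h
  have hE2s : ∀ v ∈ E2.support, v = xa ∨ v ∈ B := by
    intro v hv
    rcases hP0s v (hE2sub v hv) with h | h | h
    · exfalso
      subst h
      have := hE12 v E1.start_mem_support hv
      exact hBVC v (this ▸ hh0B) hx1VC
    · exact Or.inl h
    · exact Or.inr h
  have hI13' : ∀ v, v ∈ E1.support → v ∈ q1.support → v = h0 := fun v h1 h3 =>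
    hq1meet v h3 (hE1sub v h1)
  have hI23' : ∀ v, v ∈ E2.support → v ∈ q1.support → v = h0 := fun v h2 h3 =>
    hq1meet v h3 (hE2sub v h2)
  have hx1h0 : x1 ≠ h0 := fun h => hBVC x1 (h ▸ hh0B) hx1VC
  have hxah0 : xa ≠ h0 := fun h => hBVC xa (h ▸ hh0B) hxaVC
  have hxbh0 : xb ≠ h0 := fun h => hxbP0 (h ▸ hh0P0')
  have ht1 : 1 ≤ E1.length := by
    by_contra hlt
    push_neg at hlt
    have h0' : E1.length = 0 := by omega
    exact hx1h0 (SimpleGraph.Walk.nil_iff_length_eq.mpr h0').eq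
  have ht2 : 1 ≤ E2.length := by
    by_contra hlt
    push_neg at hlt
    have h0' : E2.length = 0 := by omega
    exact hxah0 (SimpleGraph.Walk.nil_iff_length_eq.mpr h0').eq.symm
  have ht3 : 1 ≤ q1.length := by
    by_contra hlt
    push_neg at hlt
    have h0' : q1.length = 0 := by omega
    exact hxbh0 (SimpleGraph.Walk.nil_iff_length_eq.mpr h0').eq
  -- choose a pair of attachments with the right parity
  have hc2 : c.length % 2 = 0 := Nat.even_iff.mp hce
  have hpar : Even (E1.length + E2.length + W1.length) ∨
      Even (E2.length + q1.length + W2.length) ∨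
      Even (q1.length + E1.length + W3.length) := by
    rw [Nat.even_iff, Nat.even_iff, Nat.even_iff]
    omega
  have hW1VC : ∀ x ∈ W1.support, x ∈ VC := fun x hx => hS1 x hx
  have hW2VC : ∀ x ∈ W2.support, x ∈ VC := fun x hx => hS2 x hx
  have hW3VC : ∀ x ∈ W3.support, x ∈ VC := fun x hx => hS3 x hx
  rcases hpar with hpp | hpp | hpp
  · -- pair (x1, xa), tripod path is P0 itself
    refine PAIR x1 xa hx1VC hxaVC P0 hP0p hP0len hP0s W1 (W2.append W3) hW1p
      (isPath_append' hW2p hW3p hI23) hW1VC ?_ ?_ ?_ ?_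
    · intro x hx
      rcases (SimpleGraph.Walk.mem_support_append_iff _ _).mp hx with h | h
      · exact hW2VC x h
      · exact hW3VC x h
    · intro x hx1' hx2'
      rcases (SimpleGraph.Walk.mem_support_append_iff _ _).mp hx2' with h | h
      · exact Or.inr (hI12 x hx1' h)
      · exact Or.inl (hI13 x hx1' h)
    · have h1' := Nat.even_iff.mp hpp
      rw [Nat.even_iff]
      omega
    · have h1' := Nat.even_iff.mp hpp
      rw [SimpleGraph.Walk.length_append, Nat.even_iff]
      omega
  · -- pair (xa, xb), tripod path E2.reverse ++ q1.reverse.reverse : use E2.reverse ++ E3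
    have hP23p : (E2.reverse.append q1.reverse).IsPath := by
      refine isPath_append' hE2p.reverse hq1p.reverse ?_
      intro x hxa hxb
      rw [SimpleGraph.Walk.support_reverse, List.mem_reverse] at hxa hxb
      exact hI23' x hxa hxb
    have hP23len : (E2.reverse.append q1.reverse).length = E2.length + q1.length := by
      rw [SimpleGraph.Walk.length_append, SimpleGraph.Walk.length_reverse,
        SimpleGraph.Walk.length_reverse]
    refine PAIR xa xb hxaVC hxbVC (E2.reverse.append q1.reverse) hP23p ?_ ?_
      W2 (W3.append W1) hW2p (isPath_append' hW3p hW1p (fun x h3 h1' => hI13 x h1' h3))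
      hW2VC ?_ ?_ ?_ ?_
    · omega
    · intro x hx
      rcases (SimpleGraph.Walk.mem_support_append_iff _ _).mp hx with h | h
      · rw [SimpleGraph.Walk.support_reverse, List.mem_reverse] at h
        rcases hE2s x (by exact h) with h' | h'
        · exact Or.inl h'
        · exact Or.inr (Or.inr h')
      · rw [SimpleGraph.Walk.support_reverse, List.mem_reverse] at h
        rcases hq1s x h with h' | h'
        · exact Or.inr (Or.inl h')
        · exact Or.inr (Or.inr h')
    · intro x hx
      rcases (SimpleGraph.Walk.mem_support_append_iff _ _).mp hx with h | h
      · exact hW3VC x h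
      · exact hW1VC x h
    · intro x hx1' hx2'
      rcases (SimpleGraph.Walk.mem_support_append_iff _ _).mp hx2' with h | h
      · exact Or.inr (hI23 x hx1' h)
      · exact Or.inl (hI12 x h hx1')
    · have h1' := Nat.even_iff.mp hpp
      rw [hP23len, Nat.even_iff]
      omega
    · have h1' := Nat.even_iff.mp hpp
      rw [hP23len, SimpleGraph.Walk.length_append, Nat.even_iff]
      omega
  · -- pair (xb, x1), tripod path q1 ++ E1.reverse
    have hP31p : (q1.append E1.reverse).IsPath := by
      refine isPath_append' hq1p hE1p.reverse ?_
      intro x hxa hxb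
      rw [SimpleGraph.Walk.support_reverse, List.mem_reverse] at hxb
      exact hI13' x hxb hxa
    have hP31len : (q1.append E1.reverse).length = q1.length + E1.length := by
      rw [SimpleGraph.Walk.length_append, SimpleGraph.Walk.length_reverse]
    refine PAIR xb x1 hxbVC hx1VC (q1.append E1.reverse) hP31p ?_ ?_
      W3 (W1.append W2) hW3p (isPath_append' hW1p hW2p hI12)
      hW3VC ?_ ?_ ?_ ?_
    · omega
    · intro x hx
      rcases (SimpleGraph.Walk.mem_support_append_iff _ _).mp hx with h | h
      · rcases hq1s x h with h' | h'
        · exact Or.inl h'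
        · exact Or.inr (Or.inr h')
      · rw [SimpleGraph.Walk.support_reverse, List.mem_reverse] at h
        rcases hE1s x h with h' | h'
        · exact Or.inr (Or.inl h')
        · exact Or.inr (Or.inr h')
    · intro x hx
      rcases (SimpleGraph.Walk.mem_support_append_iff _ _).mp hx with h | h
      · exact hW1VC x h
      · exact hW2VC x h
    · intro x hx1' hx2'
      rcases (SimpleGraph.Walk.mem_support_append_iff _ _).mp hx2' with h | h
      · exact Or.inr (hI13 x h hx1')
      · exact Or.inl (hI23 x h hx1')
    · have h1' := Nat.even_iff.mp hpp
      rw [hP31len, Nat.even_iff]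
      omega
    · have h1' := Nat.even_iff.mp hpp
      rw [hP31len, SimpleGraph.Walk.length_append, Nat.even_iff]
      omega
end

section
/- Let G be a graph containing a vertex-disjoint even cycle B and odd cycle D. Suppose there exist two vertex-disjoint paths P1, P2 from B to D (internally disjoint from B and D) whose endpoints u1, u2 on B are quasi-diagonal, i.e., one of the two arcs of B between u1 and u2 has length ℓ(B)/2 − 1. Then G contains two cycles of consecutive even lengths. -/
open SimpleGraph

/-- Vertices `a` and `b` of the even cycle `c` are quasi-diagonal:
one of the two arcs of `c` between them has length `ℓ(c)/2 - 1`
(equivalently, the other has length `ℓ(c)/2 + 1`). -/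
def QuasiDiagonal {V : Type*} [DecidableEq V] {G : SimpleGraph V} {x : V}
    (c : G.Walk x x) (a b : V) : Prop :=
  ∃ (ha : a ∈ c.support) (hb : b ∈ (c.rotate a ha).support),
    ((c.rotate a ha).takeUntil b hb).length = c.length / 2 - 1 ∨
    ((c.rotate a ha).takeUntil b hb).length = c.length / 2 + 1

section Aux

open SimpleGraph Walk

variable {V : Type*} {G : SimpleGraph V}

private lemma aux_one_le_length {u v : V} (h : u ≠ v) (p : G.Walk u v) : 1 ≤ p.length := by
  cases p with
  | nil => exact absurd rfl h
  | cons h q => rw [Walk.length_cons]; omega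

private lemma aux_length_rotate [DecidableEq V] {u v : V} (c : G.Walk v v) (h : u ∈ c.support) :
    (c.rotate u h).length = c.length := by
  have h1 := congrArg Walk.length (c.take_spec h)
  rw [Walk.length_append] at h1
  unfold SimpleGraph.Walk.rotate
  rw [Walk.length_append]
  omega

private lemma aux_mem_rotate [DecidableEq V] {u v t : V} (c : G.Walk v v)
    (h : u ∈ c.support) : t ∈ (c.rotate u h).support ↔ t ∈ c.support := by
  unfold SimpleGraph.Walk.rotate
  rw [Walk.mem_support_append_iff]
  conv_rhs => rw [← c.take_spec h]
  rw [Walk.mem_support_append_iff]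
  tauto

private lemma aux_loop_path {u : V} {q : G.Walk u u} (hq : q.IsPath) : q.length = 0 := by
  cases q with
  | nil => rfl
  | cons h r =>
    have hnd := hq.support_nodup
    rw [Walk.support_cons, List.nodup_cons] at hnd
    exact (hnd.1 r.end_mem_support).elim

private lemma aux_arc_paths [DecidableEq V] {u v : V} {c : G.Walk v v} (hc : c.IsCycle)
    (h : u ∈ c.support) (hne : u ≠ v) :
    (c.takeUntil u h).IsPath ∧ (c.dropUntil u h).IsPath := by
  have hnd := hc.support_nodup
  have htail : c.support.tail
      = (c.takeUntil u h).support.tail ++ (c.dropUntil u h).support.tail := by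
    conv_lhs => rw [← c.take_spec h]
    rw [Walk.tail_support_append]
  rw [htail, List.nodup_append] at hnd
  obtain ⟨h1, h2, h3⟩ := hnd
  have hu_t : u ∈ (c.takeUntil u h).support.tail := by
    have hm := (c.takeUntil u h).end_mem_support
    rw [Walk.support_eq_cons, List.mem_cons] at hm
    rcases hm with hm | hm
    · exact absurd hm hne
    · exact hm
  have hv_d : v ∈ (c.dropUntil u h).support.tail := by
    have hm := (c.dropUntil u h).end_mem_support
    rw [Walk.support_eq_cons, List.mem_cons] at hm
    rcases hm with hm | hm
    · exact absurd hm hne.symm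
    · exact hm
  constructor
  · apply Walk.IsPath.mk'
    rw [Walk.support_eq_cons]
    exact List.nodup_cons.mpr ⟨fun hmem => h3 v hmem v hv_d rfl, h1⟩
  · apply Walk.IsPath.mk'
    rw [Walk.support_eq_cons]
    exact List.nodup_cons.mpr ⟨fun hmem => h3 u hu_t u hmem rfl, h2⟩

private lemma aux_edge_path {u v : V} {p : G.Walk u v} (hp : p.IsPath)
    (he : s(u, v) ∈ p.edges) : p.length = 1 := by
  cases p with
  | nil => simp at he
  | @cons _ w _ hadj q =>
    rw [Walk.edges_cons, List.mem_cons] at he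
    have hq : u ∉ q.support := by
      have hnd := hp.support_nodup
      rw [Walk.support_cons, List.nodup_cons] at hnd
      exact hnd.1
    rcases he with he | he
    · rw [Sym2.eq_iff] at he
      rcases he with ⟨-, rfl⟩ | ⟨h1, h2⟩
      · rw [Walk.length_cons, aux_loop_path hp.of_cons]
      · exact absurd (h2 ▸ q.end_mem_support) hq
    · exact (hq (q.fst_mem_support_of_mem_edges he)).elim

private lemma aux_isPath_append {a b c : V} {p : G.Walk a b} {q : G.Walk b c}
    (hp : p.IsPath) (hq : q.IsPath)
    (hint : ∀ w ∈ p.support, w ∈ q.support → w = b) : (p.append q).IsPath := by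
  apply Walk.IsPath.mk'
  rw [Walk.support_append, List.nodup_append]
  have hqt : q.support.tail.Nodup ∧ b ∉ q.support.tail := by
    have hnd := hq.support_nodup
    rw [Walk.support_eq_cons, List.nodup_cons] at hnd
    exact ⟨hnd.2, hnd.1⟩
  refine ⟨hp.support_nodup, hqt.1, ?_⟩
  intro w hwp w' hwq hww
  subst hww
  have hw := hint w hwp (List.mem_of_mem_tail hwq)
  subst hw
  exact hqt.2 hwq

private lemma aux_isCycle_glue {u v : V} {p q : G.Walk u v} (hp : p.IsPath) (hq : q.IsPath)
    (hne : u ≠ v) (hq2 : 2 ≤ q.length)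
    (hint : ∀ w ∈ p.support, w ∈ q.support → w = u ∨ w = v) :
    (p.append q.reverse).IsCycle := by
  rw [Walk.isCycle_def]
  refine ⟨?_, ?_, ?_⟩
  · rw [Walk.isTrail_def, Walk.edges_append, Walk.edges_reverse, List.nodup_append]
    refine ⟨hp.isTrail.edges_nodup, List.nodup_reverse.mpr hq.isTrail.edges_nodup, ?_⟩
    have hdisj : ∀ e, e ∈ p.edges → e ∈ q.edges.reverse → False := by
      intro e
      induction e using Sym2.ind with
      | _ a b =>
        intro hep heq
        rw [List.mem_reverse] at heq
        have hab : a ≠ b := (p.adj_of_mem_edges hep).ne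
        have hap : a ∈ p.support := p.fst_mem_support_of_mem_edges hep
        have hbp : b ∈ p.support := p.snd_mem_support_of_mem_edges hep
        have haq : a ∈ q.support := q.fst_mem_support_of_mem_edges heq
        have hbq : b ∈ q.support := q.snd_mem_support_of_mem_edges heq
        have ha := hint a hap haq
        have hb := hint b hbp hbq
        have heuv : s(a, b) = s(u, v) := by
          rcases ha with rfl | rfl <;> rcases hb with rfl | rfl
          · exact absurd rfl hab
          · rfl
          · exact Sym2.eq_swap
          · exact absurd rfl hab
        rw [heuv] at heq
        have hlq := aux_edge_path hq heq
        omega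
    exact fun e hep e' heq hee => by subst hee; exact hdisj e hep heq
  · intro hnil
    have hl := congrArg Walk.length hnil
    rw [Walk.length_append, Walk.length_reverse] at hl
    simp only [Walk.length_nil] at hl
    omega
  · rw [Walk.tail_support_append, List.nodup_append]
    have hpt : p.support.tail.Nodup ∧ u ∉ p.support.tail := by
      have hnd := hp.support_nodup
      rw [Walk.support_eq_cons, List.nodup_cons] at hnd
      exact ⟨hnd.2, hnd.1⟩
    have hqt : q.reverse.support.tail.Nodup ∧ v ∉ q.reverse.support.tail := by
      have hnd := hq.reverse.support_nodup
      rw [Walk.support_eq_cons, List.nodup_cons] at hnd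
      exact ⟨hnd.2, hnd.1⟩
    refine ⟨hpt.1, hqt.1, ?_⟩
    intro w hw1 w' hw2 hww
    subst hww
    have hwp : w ∈ p.support := List.mem_of_mem_tail hw1
    have hwq : w ∈ q.support := by
      have hm := List.mem_of_mem_tail hw2
      rw [Walk.support_reverse, List.mem_reverse] at hm
      exact hm
    rcases hint w hwp hwq with rfl | rfl
    · exact hpt.2 hw1
    · exact hqt.2 hw2

end Aux

/-- If `G` has disjoint cycles `B` (even) and `D` (odd), joined by two disjoint paths
`P₁, P₂` (internally disjoint from both cycles) whose endpoints on `B` are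
quasi-diagonal, then `G` has two cycles of consecutive even lengths. -/
theorem stmt_5 {V : Type*} [DecidableEq V] (G : SimpleGraph V) {x z u₁ u₂ w₁ w₂ : V}
    (b : G.Walk x x) (d : G.Walk z z) (hb : b.IsCycle) (hd : d.IsCycle)
    (hbe : Even b.length) (hdo : Odd d.length)
    (hdisj : ∀ v ∈ b.support, v ∉ d.support)
    (p₁ : G.Walk u₁ w₁) (p₂ : G.Walk u₂ w₂) (hp₁ : p₁.IsPath) (hp₂ : p₂.IsPath)
    (hu₁ : u₁ ∈ b.support) (hu₂ : u₂ ∈ b.support)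
    (hw₁ : w₁ ∈ d.support) (hw₂ : w₂ ∈ d.support)
    (hi₁ : ∀ v ∈ p₁.support, v ≠ u₁ → v ≠ w₁ → v ∉ b.support ∧ v ∉ d.support)
    (hi₂ : ∀ v ∈ p₂.support, v ≠ u₂ → v ≠ w₂ → v ∉ b.support ∧ v ∉ d.support)
    (hpd : ∀ v ∈ p₁.support, v ∉ p₂.support)
    (hqd : QuasiDiagonal b u₁ u₂) :
    HasTwoConsecEvenCycles G := by
  classical
  obtain ⟨ha, hbmem, hql⟩ := hqd
  -- basic distinctness facts
  have hu₁d : u₁ ∉ d.support := hdisj u₁ hu₁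
  have hu₂d : u₂ ∉ d.support := hdisj u₂ hu₂
  have hw₁b : w₁ ∉ b.support := fun h => hdisj w₁ h hw₁
  have hw₂b : w₂ ∉ b.support := fun h => hdisj w₂ h hw₂
  have hu12 : u₁ ≠ u₂ := fun h => hpd u₁ p₁.start_mem_support (h ▸ p₂.start_mem_support)
  have hw12 : w₁ ≠ w₂ := fun h => hpd w₁ p₁.end_mem_support (h ▸ p₂.end_mem_support)
  have hu₁w₁ : u₁ ≠ w₁ := fun h => hu₁d (h ▸ hw₁)
  have hu₂w₂ : u₂ ≠ w₂ := fun h => hu₂d (h ▸ hw₂)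
  -- the two arcs of B between u₁ and u₂
  set b' : G.Walk u₁ u₁ := b.rotate u₁ ha with hb'def
  have hb'c : b'.IsCycle := hb.rotate ha
  set A₁ : G.Walk u₁ u₂ := b'.takeUntil u₂ hbmem with hA₁def
  set A₂ : G.Walk u₂ u₁ := b'.dropUntil u₂ hbmem with hA₂def
  obtain ⟨hA₁p, hA₂p⟩ := aux_arc_paths hb'c hbmem hu12.symm
  have hA12 : A₁.length + A₂.length = b.length := by
    have h1 := congrArg Walk.length (b'.take_spec hbmem)
    rw [Walk.length_append] at h1
    rw [hA₁def, hA₂def, h1, hb'def, aux_length_rotate]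
  have hA₁sub : ∀ t ∈ A₁.support, t ∈ b.support := fun t ht =>
    (aux_mem_rotate b ha).mp (b'.support_takeUntil_subset hbmem ht)
  have hA₂sub : ∀ t ∈ A₂.support, t ∈ b.support := fun t ht =>
    (aux_mem_rotate b ha).mp (b'.support_dropUntil_subset hbmem ht)
  -- the two arcs of D between w₁ and w₂
  set d' : G.Walk w₁ w₁ := d.rotate w₁ hw₁ with hd'def
  have hd'c : d'.IsCycle := hd.rotate hw₁
  have hw₂' : w₂ ∈ d'.support := (aux_mem_rotate d hw₁).mpr hw₂
  set C₁ : G.Walk w₁ w₂ := d'.takeUntil w₂ hw₂' with hC₁def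
  set C₂ : G.Walk w₂ w₁ := d'.dropUntil w₂ hw₂' with hC₂def
  obtain ⟨hC₁p, hC₂p⟩ := aux_arc_paths hd'c hw₂' hw12.symm
  have hC12 : C₁.length + C₂.length = d.length := by
    have h1 := congrArg Walk.length (d'.take_spec hw₂')
    rw [Walk.length_append] at h1
    rw [hC₁def, hC₂def, h1, hd'def, aux_length_rotate]
  have hC₁sub : ∀ t ∈ C₁.support, t ∈ d.support := fun t ht =>
    (aux_mem_rotate d hw₁).mp (d'.support_takeUntil_subset hw₂' ht)
  have hC₂sub : ∀ t ∈ C₂.support, t ∈ d.support := fun t ht =>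
    (aux_mem_rotate d hw₁).mp (d'.support_dropUntil_subset hw₂' ht)
  -- choose the arc of D of the parity we need
  have hdodd : d.length % 2 = 1 := Nat.odd_iff.mp hdo
  obtain ⟨arc, harcp, harcsub, harcpar⟩ :
      ∃ arc : G.Walk w₁ w₂, arc.IsPath ∧ (∀ t ∈ arc.support, t ∈ d.support) ∧
        (A₁.length + p₁.length + p₂.length + arc.length) % 2 = 0 := by
    rcases Nat.even_or_odd (A₁.length + p₁.length + p₂.length + C₁.length) with hE | hO
    · exact ⟨C₁, hC₁p, hC₁sub, Nat.even_iff.mp hE⟩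
    · refine ⟨C₂.reverse, hC₂p.reverse, ?_, ?_⟩
      · intro t ht
        rw [Walk.support_reverse, List.mem_reverse] at ht
        exact hC₂sub t ht
      · rw [Walk.length_reverse]
        have hO' := Nat.odd_iff.mp hO
        omega
  -- the connecting path Q from u₁ to u₂ through D
  set Q : G.Walk u₁ u₂ := p₁.append (arc.append p₂.reverse) with hQdef
  have hQp : Q.IsPath := by
    apply aux_isPath_append hp₁
    · apply aux_isPath_append harcp hp₂.reverse
      intro t ht ht2
      rw [Walk.support_reverse, List.mem_reverse] at ht2
      by_contra hne'
      rcases eq_or_ne t u₂ with rfl | htu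
      · exact hu₂d (harcsub _ ht)
      · exact (hi₂ t ht2 htu hne').2 (harcsub _ ht)
    · intro t ht hta
      rw [Walk.mem_support_append_iff] at hta
      rcases hta with hta | hta
      · by_contra hne'
        rcases eq_or_ne t u₁ with rfl | htu
        · exact hu₁d (harcsub _ hta)
        · exact (hi₁ t ht htu hne').2 (harcsub _ hta)
      · rw [Walk.support_reverse, List.mem_reverse] at hta
        exact (hpd t ht hta).elim
  have hQmem : ∀ t ∈ Q.support, t ∈ b.support → t = u₁ ∨ t = u₂ := by
    intro t ht htb
    rw [hQdef, Walk.mem_support_append_iff, Walk.mem_support_append_iff] at ht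
    rcases ht with ht | ht | ht
    · rcases eq_or_ne t u₁ with rfl | h1
      · exact Or.inl rfl
      · rcases eq_or_ne t w₁ with rfl | h2
        · exact (hw₁b htb).elim
        · exact ((hi₁ t ht h1 h2).1 htb).elim
    · exact (hdisj t htb (harcsub t ht)).elim
    · rw [Walk.support_reverse, List.mem_reverse] at ht
      rcases eq_or_ne t u₂ with rfl | h1
      · exact Or.inr rfl
      · rcases eq_or_ne t w₂ with rfl | h2
        · exact (hw₂b htb).elim
        · exact ((hi₂ t ht h1 h2).1 htb).elim
  have hQlen : Q.length = p₁.length + (arc.length + p₂.length) := by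
    rw [hQdef, Walk.length_append, Walk.length_append, Walk.length_reverse]
  have hQ2 : 2 ≤ Q.length := by
    have h1 := aux_one_le_length hu₁w₁ p₁
    have h2 := aux_one_le_length hu₂w₂ p₂
    omega
  -- the two cycles
  have hK₁ : (A₁.append Q.reverse).IsCycle :=
    aux_isCycle_glue hA₁p hQp hu12 hQ2
      (fun t htA htQ => hQmem t htQ (hA₁sub t htA))
  have hK₂ : (A₂.reverse.append Q.reverse).IsCycle := by
    apply aux_isCycle_glue hA₂p.reverse hQp hu12 hQ2
    intro t htA htQ
    rw [Walk.support_reverse, List.mem_reverse] at htA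
    exact hQmem t htQ (hA₂sub t htA)
  have hK₁len : (A₁.append Q.reverse).length = A₁.length + Q.length := by
    rw [Walk.length_append, Walk.length_reverse]
  have hK₂len : (A₂.reverse.append Q.reverse).length = A₂.length + Q.length := by
    rw [Walk.length_append, Walk.length_reverse, Walk.length_reverse]
  have h3b : 3 ≤ b.length := hb.three_le_length
  have hbev : b.length % 2 = 0 := Nat.even_iff.mp hbe
  have h3K₁ : 3 ≤ A₁.length + Q.length := hK₁len ▸ hK₁.three_le_length
  have h3K₂ : 3 ≤ A₂.length + Q.length := hK₂len ▸ hK₂.three_le_length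
  rcases hql with h | h
  · -- A₁ is the short arc : lengths A₁ + Q and A₂ + Q = A₁ + Q + 2
    refine ⟨u₁, u₁, A₁.append Q.reverse, A₂.reverse.append Q.reverse,
      (A₁.length + Q.length) / 2, hK₁, hK₂, ?_, ?_, ?_⟩
    · omega
    · rw [hK₁len]; omega
    · rw [hK₂len]; omega
  · -- A₂ is the short arc
    refine ⟨u₁, u₁, A₂.reverse.append Q.reverse, A₁.append Q.reverse,
      (A₂.length + Q.length) / 2, hK₂, hK₁, ?_, ?_, ?_⟩
    · omega
    · rw [hK₂len]; omega
    · rw [hK₁len]; omega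
end

section
/- Let G be a graph containing an even cycle B and an odd cycle D meeting in exactly one vertex u. If there is a path in G between B−u and D−u, internally disjoint from B and D, whose endpoint on B is quasi-diagonal with u in B, then G contains two cycles of consecutive even lengths. -/
open SimpleGraph

namespace SimpleGraph.Walk

variable {V : Type*} {G : SimpleGraph V}

private lemma one_le_length_of_ne {x y : V} {p : G.Walk x y} (h : x ≠ y) : 1 ≤ p.length := by
  cases p with
  | nil => exact absurd rfl h
  | cons _ q => simp [Nat.succ_le_succ]

private lemma length_rotate' [DecidableEq V] {v u : V} {c : G.Walk v v} (h : u ∈ c.support) :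
    (c.rotate u h).length = c.length := by
  have h1 := congrArg Walk.length (c.take_spec h)
  rw [length_append] at h1
  rw [rotate, length_append]
  omega

private lemma mem_support_rotate' [DecidableEq V] {v u x : V} {c : G.Walk v v}
    (h : u ∈ c.support) : x ∈ (c.rotate u h).support ↔ x ∈ c.support := by
  rw [rotate, mem_support_append_iff]
  conv_rhs => rw [← c.take_spec h]
  rw [mem_support_append_iff]
  tauto

/-- takeUntil and dropUntil of a cycle at a vertex other than the base are paths. -/
private lemma cycle_arcs [DecidableEq V] {a u : V} {c : G.Walk a a} (hc : c.IsCycle)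
    (h : u ∈ c.support) (hua : u ≠ a) :
    (c.takeUntil u h).IsPath ∧ (c.dropUntil u h).IsPath := by
  cases c with
  | nil => exact absurd rfl hc.ne_nil
  | @cons _ x _ r c' =>
    rw [cons_isCycle_iff] at hc
    have h' : u ∈ c'.support := by
      rcases List.mem_cons.mp (by simpa [support_cons] using h) with h1 | h1
      · exact absurd h1 hua
      · exact h1
    have htU : (cons r c').takeUntil u h = cons r (c'.takeUntil u h') := by
      rw [takeUntil]
      rw [dif_neg (Ne.symm hua)]
    have hdU : (cons r c').dropUntil u h = c'.dropUntil u h' := by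
      rw [dropUntil]
      rw [dif_neg (Ne.symm hua)]
    have hnd := hc.1.support_nodup
    rw [← c'.take_spec h', support_append] at hnd
    obtain ⟨hnd1, hnd2, hdisj⟩ := List.nodup_append'.mp hnd
    constructor
    · rw [htU, cons_isPath_iff]
      refine ⟨hc.1.takeUntil h', fun hmem => ?_⟩
      have ha2 : a ∈ (c'.dropUntil u h').support.tail := by
        have hend : a ∈ (c'.dropUntil u h').support := end_mem_support _
        rw [support_eq_cons] at hend
        rcases List.mem_cons.mp hend with h1 | h1
        · exact absurd h1.symm hua
        · exact h1
      exact hdisj hmem ha2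
    · rw [hdU, isPath_def, support_eq_cons]
      refine List.nodup_cons.mpr ⟨fun hmem => ?_, hnd2⟩
      exact hdisj (end_mem_support (c'.takeUntil u h')) hmem

private lemma isPath_append_of_meet {u v w : V} {P : G.Walk u v} {Q : G.Walk v w}
    (hP : P.IsPath) (hQ : Q.IsPath) (hint : ∀ x, x ∈ P.support → x ∈ Q.support → x = v) :
    (P.append Q).IsPath := by
  rw [isPath_def, support_append]
  refine List.nodup_append'.mpr ⟨hP.support_nodup, hQ.support_nodup.tail, ?_⟩
  intro x hx1 hx2
  have hx2' : x ∈ Q.support := List.mem_of_mem_tail hx2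
  have hxv : x = v := hint x hx1 hx2'
  subst hxv
  have := hQ.support_nodup
  rw [support_eq_cons] at this
  exact (List.nodup_cons.mp this).1 hx2

private lemma length_eq_one_of_mem_edges {u w : V} {P : G.Walk u w} (hP : P.IsPath)
    (he : s(u, w) ∈ P.edges) : P.length = 1 := by
  cases P with
  | nil => simp at he
  | @cons _ x _ r q =>
    rw [cons_isPath_iff] at hP
    rw [edges_cons, List.mem_cons] at he
    rcases he with h1 | h1
    · have hxw : x = w := by
        rw [Sym2.eq_iff] at h1
        rcases h1 with ⟨-, h⟩ | ⟨-, h⟩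
        · exact h.symm
        · exact absurd (h ▸ end_mem_support q) hP.2
      subst hxw
      cases q with
      | nil => rfl
      | cons r' q' =>
        rw [cons_isPath_iff] at hP
        exact absurd (end_mem_support q') hP.1.2
    · exact absurd (fst_mem_support_of_mem_edges q h1) hP.2

private lemma isCycle_append_of_meet {u w : V} (hne : u ≠ w) {P : G.Walk u w} {Q : G.Walk w u}
    (hP : P.IsPath) (hQ : Q.IsPath) (hlen : 3 ≤ P.length + Q.length)
    (hint : ∀ x, x ∈ P.support → x ∈ Q.support → x = u ∨ x = w) :
    (P.append Q).IsCycle := by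
  have hedisj : ∀ e, e ∈ P.edges → e ∈ Q.edges → False := by
    intro e heP heQ
    induction e with
    | h x y =>
      have hxy : x ≠ y := (P.adj_of_mem_edges heP).ne
      have hxP := fst_mem_support_of_mem_edges P heP
      have hyP := snd_mem_support_of_mem_edges P heP
      have hxQ := fst_mem_support_of_mem_edges Q heQ
      have hyQ := snd_mem_support_of_mem_edges Q heQ
      have hx := hint x hxP hxQ
      have hy := hint y hyP hyQ
      have he' : s(x, y) = s(u, w) := by
        rcases hx with rfl | rfl <;> rcases hy with rfl | rfl
        · exact absurd rfl hxy
        · rfl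
        · exact Sym2.eq_swap
        · exact absurd rfl hxy
      have h1 : P.length = 1 := length_eq_one_of_mem_edges hP (he' ▸ heP)
      have heQ' : s(w, u) ∈ Q.edges := by rw [Sym2.eq_swap]; exact he' ▸ heQ
      have h2 : Q.length = 1 := length_eq_one_of_mem_edges hQ heQ'
      omega
  rw [isCycle_def]
  refine ⟨?_, ?_, ?_⟩
  · rw [isTrail_def, edges_append]
    exact List.nodup_append'.mpr ⟨hP.isTrail.edges_nodup, hQ.isTrail.edges_nodup, hedisj⟩
  · intro hnil
    have := congrArg Walk.length hnil
    rw [length_append] at this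
    simp only [length_nil] at this
    omega
  · rw [tail_support_append]
    refine List.nodup_append'.mpr ⟨hP.support_nodup.tail, hQ.support_nodup.tail, ?_⟩
    intro x hx1 hx2
    have hx1' : x ∈ P.support := List.mem_of_mem_tail hx1
    have hx2' : x ∈ Q.support := List.mem_of_mem_tail hx2
    rcases hint x hx1' hx2' with rfl | rfl
    · have := hP.support_nodup
      rw [support_eq_cons] at this
      exact (List.nodup_cons.mp this).1 hx1
    · have := hQ.support_nodup
      rw [support_eq_cons] at this
      exact (List.nodup_cons.mp this).1 hx2

end SimpleGraph.Walk



open SimpleGraph.Walk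

/-- If an even cycle `B` and an odd cycle `D` meet in exactly one vertex `u`, and there
is a path from `B - u` to `D - u` internally disjoint from both whose endpoint on `B`
is quasi-diagonal with `u`, then `G` has two cycles of consecutive even lengths. -/
theorem stmt_6 {V : Type*} [DecidableEq V] (G : SimpleGraph V) {u a w : V}
    (b : G.Walk u u) (d : G.Walk u u) (hb : b.IsCycle) (hd : d.IsCycle)
    (hbe : Even b.length) (hdo : Odd d.length)
    (hmeet : ∀ v, v ∈ b.support → v ∈ d.support → v = u)
    (p : G.Walk a w) (hp : p.IsPath)
    (ha : a ∈ b.support) (hau : a ≠ u) (hw : w ∈ d.support) (hwu : w ≠ u)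
    (hi : ∀ v ∈ p.support, v ≠ a → v ≠ w → v ∉ b.support ∧ v ∉ d.support)
    (hqd : QuasiDiagonal b a u) :
    HasTwoConsecEvenCycles G := by
  classical
  obtain ⟨ha', hu, hlenq⟩ := hqd
  have hcyc : (b.rotate a ha').IsCycle := hb.rotate ha'
  obtain ⟨hq1, hq2⟩ := cycle_arcs hcyc hu (Ne.symm hau)
  have hsum : ((b.rotate a ha').takeUntil u hu).length + ((b.rotate a ha').dropUntil u hu).length
      = b.length := by
    have h1 := congrArg Walk.length ((b.rotate a ha').take_spec hu)
    rw [length_append] at h1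
    rw [h1]
    exact length_rotate' ha'
  obtain ⟨m', hm'⟩ := hbe
  have hb3 := hb.three_le_length
  have hm2 : 2 ≤ m' := by omega
  have hmemc : ∀ x, x ∈ (b.rotate a ha').support → x ∈ b.support :=
    fun x hx => (mem_support_rotate' ha').mp hx
  obtain ⟨hr1, hr2⟩ := cycle_arcs hd hw hwu
  have hsumd : (d.takeUntil w hw).length + (d.dropUntil w hw).length = d.length := by
    have h1 := congrArg Walk.length (d.take_spec hw)
    rw [length_append] at h1
    exact h1
  have hwb : w ∉ b.support := fun hwb => hwu (hmeet w hwb hw)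
  have haw : a ≠ w := by
    intro h
    exact hau (hmeet a ha (by rw [h]; exact hw))
  have hpl : 1 ≤ p.length := one_le_length_of_ne haw
  have key : ∀ (A : G.Walk u a) (R : G.Walk w u), A.IsPath → R.IsPath →
      (∀ x ∈ A.support, x ∈ b.support) → (∀ x ∈ R.support, x ∈ d.support) →
      1 ≤ A.length → 1 ≤ R.length →
      ∃ C : G.Walk u u, C.IsCycle ∧ C.length = A.length + p.length + R.length := by
    intro A R hA hR hAb hRd hA1 hR1
    have hAp : (A.append p).IsPath := by
      apply isPath_append_of_meet hA hp
      intro x hxA hxp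
      by_contra hxa
      rcases eq_or_ne x w with rfl | hxw
      · exact hwb (hAb _ hxA)
      · exact (hi x hxp hxa hxw).1 (hAb _ hxA)
    refine ⟨(A.append p).append R, ?_, by rw [length_append, length_append]⟩
    apply isCycle_append_of_meet (Ne.symm hwu) hAp hR (by rw [length_append]; omega)
    intro x hx hxR
    have hxd : x ∈ d.support := hRd _ hxR
    rw [mem_support_append_iff] at hx
    rcases hx with hx | hx
    · exact Or.inl (hmeet x (hAb _ hx) hxd)
    · rcases eq_or_ne x a with rfl | hxa
      · exact absurd (hmeet x ha hxd) hau
      rcases eq_or_ne x w with rfl | hxw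
      · exact Or.inr rfl
      · exact absurd hxd (hi x hx hxa hxw).2
  obtain ⟨As, Al, hAsP, hAlP, hAsb, hAlb, hAs_len, hAl_len⟩ :
      ∃ As Al : G.Walk u a, As.IsPath ∧ Al.IsPath ∧
        (∀ x ∈ As.support, x ∈ b.support) ∧ (∀ x ∈ Al.support, x ∈ b.support) ∧
        As.length = m' - 1 ∧ Al.length = m' + 1 := by
    have hmem1 : ∀ x ∈ ((b.rotate a ha').takeUntil u hu).reverse.support, x ∈ b.support := by
      intro x hx
      rw [support_reverse, List.mem_reverse] at hx
      exact hmemc x ((b.rotate a ha').support_takeUntil_subset_support hu hx)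
    have hmem2 : ∀ x ∈ ((b.rotate a ha').dropUntil u hu).support, x ∈ b.support :=
      fun x hx => hmemc x ((b.rotate a ha').support_dropUntil_subset_support hu hx)
    rcases hlenq with h1 | h1
    · exact ⟨((b.rotate a ha').takeUntil u hu).reverse, (b.rotate a ha').dropUntil u hu,
        hq1.reverse, hq2, hmem1, hmem2, by rw [length_reverse]; omega, by omega⟩
    · exact ⟨(b.rotate a ha').dropUntil u hu, ((b.rotate a ha').takeUntil u hu).reverse,
        hq2, hq1.reverse, hmem2, hmem1, by omega, by rw [length_reverse]; omega⟩
  obtain ⟨R, hRP, hRd', hR1, hReven⟩ :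
      ∃ R : G.Walk w u, R.IsPath ∧ (∀ x ∈ R.support, x ∈ d.support) ∧ 1 ≤ R.length ∧
        Even (m' - 1 + p.length + R.length) := by
    have hmem1 : ∀ x ∈ (d.dropUntil w hw).support, x ∈ d.support :=
      fun x hx => d.support_dropUntil_subset_support hw hx
    have hmem2 : ∀ x ∈ (d.takeUntil w hw).reverse.support, x ∈ d.support := by
      intro x hx
      rw [support_reverse, List.mem_reverse] at hx
      exact d.support_takeUntil_subset_support hw hx
    have h1t : 1 ≤ (d.takeUntil w hw).length := one_le_length_of_ne (Ne.symm hwu)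
    have h1d : 1 ≤ (d.dropUntil w hw).length := one_le_length_of_ne hwu
    rcases Nat.even_or_odd (m' - 1 + p.length + (d.dropUntil w hw).length) with he | ho
    · exact ⟨d.dropUntil w hw, hr2, hmem1, h1d, he⟩
    · refine ⟨(d.takeUntil w hw).reverse, hr1.reverse, hmem2, by rw [length_reverse]; omega, ?_⟩
      rw [length_reverse, Nat.even_iff]
      rw [Nat.odd_iff] at ho hdo
      omega
  obtain ⟨C1, hC1, hl1⟩ := key As R hAsP hRP hAsb hRd' (by omega) hR1
  obtain ⟨C2, hC2, hl2⟩ := key Al R hAlP hRP hAlb hRd' (by omega) hR1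
  have h3 := hC1.three_le_length
  obtain ⟨mm, hmm⟩ := hReven
  exact ⟨u, u, C1, C2, mm, hC1, hC2, by omega, by omega, by omega⟩
end

section
/- For every n with n ≡ 1 (mod 4), there exists an n-vertex graph with exactly (5/2)(n−1) edges, minimum degree 4, that contains no two cycles of consecutive even lengths: namely any connected graph each of whose blocks is a clique K_5. -/
open SimpleGraph

/-- The induced subgraph on `B` is connected and has no cut-vertex. -/
def NoCutVertex {V : Type*} (G : SimpleGraph V) (B : Set V) : Prop :=
  (G.induce B).Connected ∧
    ∀ v ∈ B, (B \ {v}).Nonempty → (G.induce (B \ {v})).Connected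

/-- `B` is a block of `G`: a maximal connected subgraph without a cut-vertex. -/
def IsBlock {V : Type*} (G : SimpleGraph V) (B : Set V) : Prop :=
  NoCutVertex G B ∧ ∀ B' : Set V, B ⊆ B' → NoCutVertex G B' → B' = B

def myG (n : ℕ) : SimpleGraph (Fin n) where
  Adj u v := u ≠ v ∧ (u.val = 0 ∨ v.val = 0 ∨ (u.val - 1) / 4 = (v.val - 1) / 4)
  symm := by constructor; rintro u v ⟨h1, h2⟩; exact ⟨h1.symm, by tauto⟩
  loopless := by constructor; rintro v ⟨h, -⟩; exact h rfl

lemma myG_adj {n : ℕ} {u v : Fin n} :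
    (myG n).Adj u v ↔ u ≠ v ∧ (u.val = 0 ∨ v.val = 0 ∨ (u.val - 1) / 4 = (v.val - 1) / 4) :=
  Iff.rfl

/-- the block set with index k -/
def myB (n k : ℕ) : Set (Fin n) := {v | v.val = 0 ∨ (v.val ≠ 0 ∧ (v.val - 1) / 4 = k)}

lemma mem_myB {n k : ℕ} {v : Fin n} :
    v ∈ myB n k ↔ v.val = 0 ∨ (4 * k + 1 ≤ v.val ∧ v.val ≤ 4 * k + 4) := by
  unfold myB; simp only [Set.mem_setOf_eq]; omega

lemma myB_clique {n k : ℕ} {u v : Fin n} (hu : u ∈ myB n k) (hv : v ∈ myB n k)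
    (huv : u ≠ v) : (myG n).Adj u v := by
  rw [mem_myB] at hu hv
  exact ⟨huv, by omega⟩

/-- explicit finset of the block -/
def myBF (n k : ℕ) (h : 4 * k + 4 < n) : Finset (Fin n) :=
  {⟨0, by omega⟩, ⟨4*k+1, by omega⟩, ⟨4*k+2, by omega⟩, ⟨4*k+3, by omega⟩, ⟨4*k+4, by omega⟩}

lemma myBF_card {n k : ℕ} (h : 4 * k + 4 < n) : (myBF n k h).card = 5 := by
  unfold myBF
  rw [Finset.card_insert_of_notMem, Finset.card_insert_of_notMem,
    Finset.card_insert_of_notMem, Finset.card_insert_of_notMem, Finset.card_singleton] <;>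
    simp [Fin.ext_iff]

lemma myB_eq_coe {n k : ℕ} (h : 4 * k + 4 < n) : myB n k = ↑(myBF n k h) := by
  ext v
  simp only [mem_myB, myBF, Finset.coe_insert, Set.mem_insert_iff, Finset.coe_singleton,
    Set.mem_singleton_iff, Fin.ext_iff]
  omega

lemma myB_ncard {n k : ℕ} (h : 4 * k + 4 < n) : (myB n k).ncard = 5 := by
  rw [myB_eq_coe h, Set.ncard_coe_finset, myBF_card]

lemma clique_induce_connected {V : Type*} (G : SimpleGraph V) (S : Set V)
    (hS : S.Nonempty) (hcl : ∀ u ∈ S, ∀ v ∈ S, u ≠ v → G.Adj u v) :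
    (G.induce S).Connected := by
  rw [connected_iff]
  refine ⟨fun u v => ?_, ⟨⟨hS.choose, hS.choose_spec⟩⟩⟩
  by_cases h : u = v
  · exact h ▸ Reachable.refl u
  · exact Adj.reachable (by
      simp only [comap_adj, Function.Embedding.coe_subtype]
      exact hcl u u.2 v v.2 (fun hh => h (Subtype.ext hh)))

lemma myB_noCutVertex {n k : ℕ} (h : 4 * k + 4 < n) : NoCutVertex (myG n) (myB n k) := by
  constructor
  · exact clique_induce_connected _ _ ⟨⟨0, by omega⟩, by rw [mem_myB]; left; rfl⟩
      (fun u hu v hv huv => myB_clique hu hv huv)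
  · intro v hv hne
    exact clique_induce_connected _ _ hne
      (fun u hu w hw huw => myB_clique hu.1 hw.1 huw)

/-- In an induced subgraph avoiding the 0-valued vertex, walks preserve the group. -/
lemma induce_walk_grp {n : ℕ} (S : Set (Fin n)) (h0 : ∀ w ∈ S, w.val ≠ 0)
    {u v : S} (p : ((myG n).induce S).Walk u v) :
    (u.val.val - 1) / 4 = (v.val.val - 1) / 4 := by
  induction p with
  | nil => rfl
  | cons h p ih =>
    rename_i a b c
    have hadj : (myG n).Adj a.val b.val := by
      simpa only [comap_adj, Function.Embedding.coe_subtype] using h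
    have h2 := hadj.2
    have ha := h0 a a.2
    have hb := h0 b b.2
    omega

lemma noCutVertex_subset {n : ℕ} (hn : n % 4 = 1) (h5 : 5 ≤ n) {B : Set (Fin n)}
    (hB : NoCutVertex (myG n) B) : ∃ k, 4 * k + 4 < n ∧ B ⊆ myB n k := by
  by_cases hu : ∃ u ∈ B, u.val ≠ 0
  · obtain ⟨u, huB, hu0⟩ := hu
    have hu1 : 1 ≤ u.val := by omega
    have hun : u.val < n := u.isLt
    refine ⟨(u.val - 1) / 4, by omega, ?_⟩
    intro v hvB
    rw [mem_myB]
    by_cases hv0 : v.val = 0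
    · exact Or.inl hv0
    · right
      -- show grp v = grp u via a walk avoiding zero
      have hgrp : (v.val - 1) / 4 = (u.val - 1) / 4 := by
        by_cases hz : (⟨0, by omega⟩ : Fin n) ∈ B
        · set z : Fin n := ⟨0, by omega⟩ with hzdef
          have hne : (B \ {z}).Nonempty := ⟨u, huB, by simp [Fin.ext_iff, hzdef, hu0]⟩
          have hconn := hB.2 z hz hne
          have h0 : ∀ w ∈ B \ {z}, w.val ≠ 0 := by
            rintro w ⟨hwB, hwz⟩ hw0
            exact hwz (by simp [Fin.ext_iff, hzdef, hw0])
          have hvB' : v ∈ B \ {z} := ⟨hvB, by simp [Fin.ext_iff, hzdef, hv0]⟩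
          have huB' : u ∈ B \ {z} := ⟨huB, by simp [Fin.ext_iff, hzdef, hu0]⟩
          obtain ⟨p⟩ := hconn.preconnected ⟨v, hvB'⟩ ⟨u, huB'⟩
          exact induce_walk_grp _ h0 p
        · have h0 : ∀ w ∈ B, w.val ≠ 0 := by
            intro w hwB hw0
            exact hz (by convert hwB using 1; exact (Fin.ext hw0.symm))
          obtain ⟨p⟩ := hB.1.preconnected ⟨v, hvB⟩ ⟨u, huB⟩
          exact induce_walk_grp _ h0 p
      omega
  · push_neg at hu
    refine ⟨0, by omega, fun v hv => ?_⟩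
    rw [mem_myB]
    exact Or.inl (hu v hv)

lemma isBlock_eq {n : ℕ} (hn : n % 4 = 1) (h5 : 5 ≤ n) {B : Set (Fin n)}
    (hB : IsBlock (myG n) B) : ∃ k, 4 * k + 4 < n ∧ B = myB n k := by
  obtain ⟨k, hk, hsub⟩ := noCutVertex_subset hn h5 hB.1
  exact ⟨k, hk, (hB.2 (myB n k) hsub (myB_noCutVertex hk)).symm⟩

/-- walk with no zero vertex stays in one group -/
lemma walk_grp {n : ℕ} {u v : Fin n} (p : (myG n).Walk u v)
    (h0 : ∀ w ∈ p.support, w.val ≠ 0) :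
    ∀ w ∈ p.support, (w.val - 1) / 4 = (u.val - 1) / 4 := by
  induction p with
  | nil => intro w hw; rw [SimpleGraph.Walk.mem_support_nil_iff] at hw; rw [hw]
  | cons h p ih =>
    rename_i a b c
    intro w hw
    have ha : a.val ≠ 0 := h0 a (SimpleGraph.Walk.start_mem_support _)
    have hb : b.val ≠ 0 := by
      apply h0
      simp [SimpleGraph.Walk.support_cons, SimpleGraph.Walk.start_mem_support]
    have hab : (b.val - 1) / 4 = (a.val - 1) / 4 := by
      have := h.2; omega
    rw [SimpleGraph.Walk.support_cons] at hw h0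
    rcases List.mem_cons.mp hw with h1 | h2
    · rw [h1]
    · have := ih (fun x hx => h0 x (List.mem_cons_of_mem _ hx)) w h2
      omega

lemma cycle_at_zero {n : ℕ} (hn : n % 4 = 1) {z : Fin n} (hz0 : z.val = 0)
    (c : (myG n).Walk z z) (hc : c.IsCycle) :
    ∃ k, 4 * k + 4 < n ∧ ∀ w ∈ c.support, w ∈ myB n k := by
  cases c with
  | nil => exact absurd rfl hc.ne_nil
  | cons h q =>
    rename_i b
    have h3 := hc.three_le_length
    have hnodup : q.support.Nodup := by
      have := hc.support_nodup
      simpa [SimpleGraph.Walk.support_cons] using this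
    cases hqr : q.reverse with
    | nil =>
      have : q.length = 0 := by
        have := congrArg SimpleGraph.Walk.length hqr
        simpa [SimpleGraph.Walk.length_reverse] using this
      simp [SimpleGraph.Walk.length_cons, this] at h3
    | cons h' q₂ =>
      rename_i y
      have hqsupp : q.support.reverse = z :: q₂.support := by
        rw [← SimpleGraph.Walk.support_reverse, hqr, SimpleGraph.Walk.support_cons]
      have hrev : q.support.reverse.Nodup := List.nodup_reverse.mpr hnodup
      rw [hqsupp, List.nodup_cons] at hrev
      have hz2 : z ∉ q₂.support := hrev.1
      have h0 : ∀ w ∈ q₂.support, w.val ≠ 0 := by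
        intro w hw hw0
        exact hz2 (by rwa [show z = w from Fin.ext (by omega)])
      have hy0 : y.val ≠ 0 := h0 y (SimpleGraph.Walk.start_mem_support _)
      refine ⟨(y.val - 1) / 4, by have := y.isLt; omega, ?_⟩
      have hgrp := walk_grp q₂ h0
      intro w hw
      rw [SimpleGraph.Walk.support_cons] at hw
      rw [mem_myB]
      rcases List.mem_cons.mp hw with h1 | h2
      · left; omega
      · have : w ∈ z :: q₂.support := by rw [← hqsupp]; exact List.mem_reverse.mpr h2
        rcases List.mem_cons.mp this with h1 | h2
        · left; omega
        · have := hgrp w h2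
          have hw0 := h0 w h2
          have := w.isLt
          right; omega

lemma cycle_support_subset {n : ℕ} (hn : n % 4 = 1) (h5 : 5 ≤ n) {u : Fin n}
    (c : (myG n).Walk u u) (hc : c.IsCycle) :
    ∃ k, 4 * k + 4 < n ∧ ∀ w ∈ c.support, w ∈ myB n k := by
  by_cases hz : ∃ w ∈ c.support, w.val = 0
  · obtain ⟨z, hzs, hz0⟩ := hz
    set c' := c.rotate z hzs with hc'def
    have hc'cyc : c'.IsCycle := hc.rotate hzs
    have hrot := SimpleGraph.Walk.support_rotate c z hzs
    -- membership transfer: w ∈ c.support → w ∈ c'.support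
    have hmem : ∀ w ∈ c.support, w ∈ c'.support := by
      intro w hw
      have htail : ∀ x, x ∈ c.support.tail → x ∈ c'.support := by
        intro x hx
        rw [SimpleGraph.Walk.support_eq_cons c']
        exact List.mem_cons_of_mem _ (hrot.mem_iff.mpr hx)
      rcases List.mem_cons.mp (by rw [← SimpleGraph.Walk.support_eq_cons]; exact hw) with h1 | h2
      · subst h1
        apply htail
        cases c with
        | nil => exact absurd rfl hc.ne_nil
        | cons h q => simpa using SimpleGraph.Walk.end_mem_support q
      · exact htail w h2
    obtain ⟨k, hk, hsub⟩ := cycle_at_zero hn hz0 c' hc'cyc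
    exact ⟨k, hk, fun w hw => hsub w (hmem w hw)⟩
  · push_neg at hz
    have hu0 : u.val ≠ 0 := hz u (SimpleGraph.Walk.start_mem_support _)
    refine ⟨(u.val - 1) / 4, by have := u.isLt; omega, fun w hw => ?_⟩
    rw [mem_myB]
    have := walk_grp c hz w hw
    have hw0 := hz w hw
    have := w.isLt
    omega

lemma cycle_length_le {n : ℕ} (hn : n % 4 = 1) (h5 : 5 ≤ n) {u : Fin n}
    (c : (myG n).Walk u u) (hc : c.IsCycle) : c.length ≤ 5 := by
  obtain ⟨k, hk, hsub⟩ := cycle_support_subset hn h5 c hc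
  have hnd : c.support.tail.Nodup := hc.support_nodup
  have hsubF : c.support.tail.toFinset ⊆ myBF n k hk := by
    intro x hx
    rw [List.mem_toFinset] at hx
    have := hsub x (List.mem_of_mem_tail hx)
    rw [myB_eq_coe hk] at this
    exact this
  have hcard := Finset.card_le_card hsubF
  rw [List.toFinset_card_of_nodup hnd, myBF_card] at hcard
  have hlen : c.support.tail.length = c.length := by
    have := SimpleGraph.Walk.length_support c
    rw [SimpleGraph.Walk.support_eq_cons] at this
    simpa using this
  omega

lemma no_two_consec {n : ℕ} (hn : n % 4 = 1) (h5 : 5 ≤ n) :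
    ¬ HasTwoConsecEvenCycles (myG n) := by
  rintro ⟨u, v, c₁, c₂, m, h1, h2, hm, l1, l2⟩
  have b1 := h1.three_le_length
  have b2 := cycle_length_le hn h5 c₂ h2
  omega

instance myGDec (n : ℕ) : DecidableRel (myG n).Adj := fun _ _ =>
  decidable_of_iff _ myG_adj.symm

lemma deg_zero {n : ℕ} (h5 : 5 ≤ n) {v : Fin n} (hv : v.val = 0) :
    (myG n).degree v = n - 1 := by
  have : (myG n).neighborFinset v = Finset.univ.erase v := by
    ext w
    rw [SimpleGraph.mem_neighborFinset, Finset.mem_erase]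
    constructor
    · intro h; exact ⟨(SimpleGraph.adj_comm _ _ _ |>.mp h).1, Finset.mem_univ _⟩
    · rintro ⟨h, -⟩; exact ⟨fun hh => h hh.symm, Or.inl hv⟩
  unfold SimpleGraph.degree
  rw [this, Finset.card_erase_of_mem (Finset.mem_univ _),
    Finset.card_univ, Fintype.card_fin]

lemma deg_nonzero {n : ℕ} (hn : n % 4 = 1) {v : Fin n} (hv : v.val ≠ 0) :
    (myG n).degree v = 4 := by
  have hvn := v.isLt
  have hk : 4 * ((v.val - 1) / 4) + 4 < n := by omega
  have hvB : v ∈ myBF n _ hk := by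
    have : v ∈ myB n ((v.val - 1) / 4) := by rw [mem_myB]; omega
    rwa [myB_eq_coe hk] at this
  have : (myG n).neighborFinset v = (myBF n _ hk).erase v := by
    ext w
    rw [SimpleGraph.mem_neighborFinset, Finset.mem_erase]
    constructor
    · rintro ⟨hne, hor⟩
      refine ⟨fun hh => hne hh.symm, ?_⟩
      have : w ∈ myB n ((v.val - 1) / 4) := by rw [mem_myB]; have := w.isLt; omega
      rwa [myB_eq_coe hk] at this
    · rintro ⟨hne, hmem⟩
      have : w ∈ myB n ((v.val - 1) / 4) := by rw [myB_eq_coe hk]; exact hmem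
      rw [mem_myB] at this
      exact ⟨fun hh => hne hh.symm, by omega⟩
  unfold SimpleGraph.degree
  rw [this, Finset.card_erase_of_mem hvB, myBF_card]

lemma sum_deg {n : ℕ} (hn : n % 4 = 1) (h5 : 5 ≤ n) :
    ∑ v : Fin n, (myG n).degree v = 5 * (n - 1) := by
  set z : Fin n := ⟨0, by omega⟩ with hz
  have hsplit : ∑ v : Fin n, (myG n).degree v
      = (∑ v ∈ Finset.univ.erase z, (myG n).degree v) + (myG n).degree z :=
    (Finset.sum_erase_add _ _ (Finset.mem_univ z)).symm
  have h1 : ∑ v ∈ Finset.univ.erase z, (myG n).degree v = 4 * (n - 1) := by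
    rw [Finset.sum_congr rfl
      (fun v hv => deg_nonzero hn (fun h0 => (Finset.mem_erase.mp hv).1 (Fin.ext h0)))]
    rw [Finset.sum_const, Finset.card_erase_of_mem (Finset.mem_univ _),
      Finset.card_univ, Fintype.card_fin, smul_eq_mul, Nat.mul_comm]
  have h2 : (myG n).degree z = n - 1 := deg_zero h5 rfl
  omega

lemma edge_count {n : ℕ} (hn : n % 4 = 1) (h5 : 5 ≤ n) :
    2 * (myG n).edgeSet.ncard = 5 * (n - 1) := by
  rw [Set.ncard_eq_toFinset_card']
  rw [← sum_deg hn h5, SimpleGraph.sum_degrees_eq_twice_card_edges]; rfl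

lemma myG_connected {n : ℕ} (h5 : 5 ≤ n) : (myG n).Connected := by
  rw [connected_iff]
  refine ⟨fun u v => ?_, ⟨⟨0, by omega⟩⟩⟩
  have key : ∀ w : Fin n, (myG n).Reachable w ⟨0, by omega⟩ := by
    intro w
    by_cases hw : w = ⟨0, by omega⟩
    · rw [hw]
    · exact Adj.reachable ⟨hw, Or.inr (Or.inl rfl)⟩
  exact (key u).trans (key v).symm

lemma nbr_ncard {n : ℕ} (v : Fin n) :
    {w : Fin n | (myG n).Adj v w}.ncard = (myG n).degree v := by
  have : {w : Fin n | (myG n).Adj v w} = (myG n).neighborSet v := rfl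
  rw [this, Set.ncard_eq_toFinset_card']
  rfl

/-- For every `n ≡ 1 (mod 4)` (with `n ≥ 5`) there is a connected `n`-vertex graph,
each of whose blocks is a clique `K₅`, with exactly `(5/2)(n-1)` edges, minimum
degree 4, and no two cycles of consecutive even lengths. -/
theorem stmt_11 (n : ℕ) (hn : n % 4 = 1) (h5 : 5 ≤ n) :
    ∃ G : SimpleGraph (Fin n),
      G.Connected ∧
      (∀ B : Set (Fin n), IsBlock G B →
        B.ncard = 5 ∧ ∀ u ∈ B, ∀ v ∈ B, u ≠ v → G.Adj u v) ∧
      2 * G.edgeSet.ncard = 5 * (n - 1) ∧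
      (∀ v : Fin n, 4 ≤ {w : Fin n | G.Adj v w}.ncard) ∧
      (∃ v : Fin n, {w : Fin n | G.Adj v w}.ncard = 4) ∧
      ¬ HasTwoConsecEvenCycles G := by
  refine ⟨myG n, myG_connected h5, ?_, edge_count hn h5, ?_, ?_, no_two_consec hn h5⟩
  · intro B hB
    obtain ⟨k, hk, heq⟩ := isBlock_eq hn h5 hB
    subst heq
    exact ⟨myB_ncard hk, fun u hu v hv huv => myB_clique hu hv huv⟩
  · intro v
    rw [nbr_ncard]
    by_cases hv : v.val = 0
    · rw [deg_zero h5 hv]; omega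
    · rw [deg_nonzero hn hv]
  · exact ⟨⟨1, by omega⟩, by rw [nbr_ncard, deg_nonzero hn (by simp)]⟩
end

section
/- Every graph with no even cycle has the property that each of its blocks is either a single vertex, a single edge, or an odd cycle. -/
open SimpleGraph

section Helpers

open SimpleGraph Walk

variable {V : Type*} {G : SimpleGraph V}

lemma edge_mem_isPath_length {u v : V} (p : G.Walk u v) (hp : p.IsPath) (he : s(u, v) ∈ p.edges) :
    p.length = 1 := by
  cases p with
  | nil => simp at he
  | cons h q =>
    rename_i w
    rw [edges_cons, List.mem_cons] at he
    rcases he with he | he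
    · have hvw : v = w := (Sym2.congr_right.mp he.symm).symm
      subst hvw
      have : q = Walk.nil := ((isPath_iff_eq_nil (p := q)).mp hp.of_cons)
      subst this; simp
    · exact absurd (q.fst_mem_support_of_mem_edges he) ((cons_isPath_iff h q).mp hp).2

lemma start_mem_support_tail {v : V} (c : G.Walk v v) (hc : ¬ c.Nil) : v ∈ c.support.tail := by
  cases c with
  | nil => simp at hc
  | cons h q => simpa using q.end_mem_support

lemma walk_length_pos_of_ne {u v : V} (p : G.Walk u v) (h : u ≠ v) : 1 ≤ p.length := by
  cases p with
  | nil => exact absurd rfl h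
  | cons _ q => simp

lemma append_reverse_isCycle {u v : V} {p q : G.Walk u v} (hp : p.IsPath) (hq : q.IsPath)
    (hne : u ≠ v) (hdisj : ∀ z, z ∈ p.support → z ∈ q.support → z = u ∨ z = v)
    (hlen : 3 ≤ p.length + q.length) : (p.append q.reverse).IsCycle := by
  have hpn : p.support.Nodup := hp.support_nodup
  have hqn : q.support.Nodup := hq.support_nodup
  rw [isCycle_def]
  refine ⟨?_, ?_, ?_⟩
  · -- trail
    rw [isTrail_def, edges_append, edges_reverse]
    rw [List.nodup_append]
    refine ⟨hp.isTrail.edges_nodup, List.nodup_reverse.mpr hq.isTrail.edges_nodup, ?_⟩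
    intro e hep e' heq' hee'
    subst hee'
    have heq : e ∈ q.edges := List.mem_reverse.mp heq'
    induction e using Sym2.ind with
    | _ a b =>
      have hap : a ∈ p.support := p.fst_mem_support_of_mem_edges hep
      have hbp : b ∈ p.support := p.snd_mem_support_of_mem_edges hep
      have haq : a ∈ q.support := q.fst_mem_support_of_mem_edges heq
      have hbq : b ∈ q.support := q.snd_mem_support_of_mem_edges heq
      have hab : a ≠ b := (p.adj_of_mem_edges hep).ne
      have ha := hdisj a hap haq
      have hb := hdisj b hbp hbq
      have hedge : s(a, b) = s(u, v) := by
        rcases ha with rfl | rfl <;> rcases hb with rfl | rfl <;>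
          first | exact absurd rfl hab | exact absurd rfl hne | rfl | exact Sym2.eq_swap
      rw [hedge] at hep heq
      have h1 := edge_mem_isPath_length p hp hep
      have h2 := edge_mem_isPath_length q hq heq
      omega
  · -- ne nil
    intro hnil
    have := congrArg Walk.length hnil
    rw [length_append, length_reverse] at this
    simp only [length_nil] at this
    omega
  · -- support tail nodup
    rw [support_append]
    have hps : p.support = u :: p.support.tail := p.support_eq_cons
    rw [hps, List.cons_append, List.tail_cons]
    rw [List.nodup_append]
    refine ⟨hpn.tail, ?_, ?_⟩
    · exact hq.reverse.support_nodup.tail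
    · intro z hzp z' hzq hzz'
      subst hzz'
      have hzp' : z ∈ p.support := by rw [hps]; exact List.mem_cons_of_mem _ hzp
      have hzq' : z ∈ q.support := by
        have : z ∈ q.reverse.support := List.mem_of_mem_tail hzq
        rwa [support_reverse, List.mem_reverse] at this
      have hzu : z ≠ u := by
        intro hzeq
        rw [hps] at hpn
        exact (List.nodup_cons.mp hpn).1 (hzeq ▸ hzp)
      have hzv : z ≠ v := by
        intro hzeq
        have hqr : q.reverse.support = v :: q.reverse.support.tail := q.reverse.support_eq_cons
        have hnd : q.reverse.support.Nodup := by
          rw [support_reverse]; exact List.nodup_reverse.mpr hqn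
        rw [hqr] at hnd
        exact (List.nodup_cons.mp hnd).1 (hzeq ▸ hzq)
      rcases hdisj z hzp' hzq' with h | h
      · exact hzu h
      · exact hzv h

lemma exists_arcs [DecidableEq V] {r : V} {C : G.Walk r r} (hC : C.IsCycle) {x y : V}
    (hx : x ∈ C.support) (hy : y ∈ C.support) (hxy : x ≠ y) :
    ∃ (P1 : G.Walk x y) (P2 : G.Walk y x), P1.IsPath ∧ P2.IsPath ∧
      P1.length + P2.length = C.length ∧
      (∀ e ∈ P1.edges, e ∈ C.edges) ∧ (∀ e ∈ P2.edges, e ∈ C.edges) ∧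
      (∀ z ∈ P1.support, z ∈ C.support) ∧ (∀ z ∈ P2.support, z ∈ C.support) ∧
      (∀ z, z ∈ P1.support → z ∈ P2.support → z = x ∨ z = y) := by
  have hCnil : ¬ C.Nil := by
    intro hn
    have := hC.three_le_length
    rw [nil_iff_length_eq] at hn
    omega
  set D := C.rotate x hx with hDdef
  have hD : D.IsCycle := hC.rotate hx
  have hrot := C.support_rotate x hx
  have hCsupp : C.support = r :: C.support.tail := C.support_eq_cons
  have htail_iff : ∀ z : V, z ∈ C.support ↔ z ∈ C.support.tail := by
    intro z
    constructor
    · intro hz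
      rw [hCsupp] at hz
      rcases List.mem_cons.mp hz with rfl | hz
      · exact start_mem_support_tail C hCnil
      · exact hz
    · intro hz; rw [hCsupp]; exact List.mem_cons_of_mem _ hz
  have hyD : y ∈ D.support := by
    have : y ∈ D.support.tail := hrot.mem_iff.mpr ((htail_iff y).mp hy)
    exact List.mem_of_mem_tail this
  have hDsub : ∀ z ∈ D.support, z ∈ C.support := by
    intro z hz
    rw [D.support_eq_cons] at hz
    rcases List.mem_cons.mp hz with rfl | hz
    · exact hx
    · exact (htail_iff z).mpr (hrot.mem_iff.mp hz)
  have hDlen : D.length = C.length := by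
    have h1 := congrArg Walk.length (C.take_spec hx)
    rw [length_append] at h1
    have h2 : D.length = (C.dropUntil x hx).length + (C.takeUntil x hx).length := by
      rw [hDdef, rotate, length_append]
    omega
  set P1 := D.takeUntil y hyD with hP1def
  set P2 := D.dropUntil y hyD with hP2def
  have hspec : P1.append P2 = D := D.take_spec hyD
  have hsupp : D.support = P1.support ++ P2.support.tail := by
    rw [← hspec, support_append]
  have hP1cons : P1.support = x :: P1.support.tail := P1.support_eq_cons
  have htaileq : D.support.tail = P1.support.tail ++ P2.support.tail := by
    rw [hsupp, hP1cons]; simp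
  have hnodup : (P1.support.tail ++ P2.support.tail).Nodup := htaileq ▸ hD.support_nodup
  have hnd := List.nodup_append.mp hnodup
  have hxP2 : x ∈ P2.support.tail := end_mem_tail_support_of_ne (Ne.symm hxy) P2
  have hyP1 : y ∈ P1.support.tail := end_mem_tail_support_of_ne hxy P1
  have hP1path : P1.IsPath := by
    apply IsPath.mk'
    rw [hP1cons]
    exact List.nodup_cons.mpr ⟨fun hmem => hnd.2.2 _ hmem _ hxP2 rfl, hnd.1⟩
  have hP2path : P2.IsPath := by
    apply IsPath.mk'
    rw [P2.support_eq_cons]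
    exact List.nodup_cons.mpr ⟨fun hmem => hnd.2.2 _ hyP1 _ hmem rfl, hnd.2.1⟩
  have hlen : P1.length + P2.length = C.length := by
    have := congrArg Walk.length hspec
    rw [length_append] at this
    omega
  have hErot := (C.rotate_edges x hx).perm
  refine ⟨P1, P2, hP1path, hP2path, hlen, ?_, ?_, ?_, ?_, ?_⟩
  · intro e he; exact hErot.subset (D.edges_takeUntil_subset hyD he)
  · intro e he; exact hErot.subset (D.edges_dropUntil_subset hyD he)
  · intro z hz; exact hDsub z (D.support_takeUntil_subset hyD hz)
  · intro z hz; exact hDsub z (D.support_dropUntil_subset hyD hz)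
  · intro z hz1 hz2
    by_cases hzx : z = x
    · exact Or.inl hzx
    by_cases hzy : z = y
    · exact Or.inr hzy
    exfalso
    have hz1' : z ∈ P1.support.tail := by
      rw [hP1cons] at hz1
      rcases List.mem_cons.mp hz1 with h | h
      · exact absurd h hzx
      · exact h
    have hz2' : z ∈ P2.support.tail := by
      rw [P2.support_eq_cons] at hz2
      rcases List.mem_cons.mp hz2 with h | h
      · exact absurd h hzy
      · exact h
    exact hnd.2.2 _ hz1' _ hz2' rfl

lemma walk_cross (S : Set V) : ∀ {a b : V} (_p : G.Walk a b), a ∈ S → b ∉ S →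
    ∃ u v, G.Adj u v ∧ u ∈ S ∧ v ∉ S := by
  intro a b p
  induction p with
  | nil => intro ha hb; exact absurd ha hb
  | @cons a m b h q ih =>
    intro ha hb
    by_cases hm : m ∈ S
    · exact ih hm hb
    · exact ⟨a, m, h, ha, hm⟩

lemma walk_firsthit (S : Set V) : ∀ {a b : V} (p : G.Walk a b), a ∉ S → b ∈ S →
    ∃ (y : V) (q : G.Walk a y), y ∈ S ∧ (∀ z ∈ q.support, z ∈ p.support) ∧
      (∀ z ∈ q.support, z ∈ S → z = y) ∧ (p.IsPath → q.IsPath) := by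
  intro a b p
  induction p with
  | nil => intro ha hb; exact absurd hb ha
  | @cons a m b h q ih =>
    intro ha hb
    by_cases hm : m ∈ S
    · refine ⟨m, Walk.cons h Walk.nil, hm, ?_, ?_, ?_⟩
      · intro z hz
        simp only [support_cons, support_nil, List.mem_cons, List.mem_singleton] at hz
        rcases hz with rfl | rfl | h'
        · simp
        · simp
        · simp at h'
      · intro z hz hzS
        simp only [support_cons, support_nil, List.mem_cons, List.mem_singleton] at hz
        rcases hz with rfl | rfl | h'
        · exact absurd hzS ha
        · rfl
        · simp at h'
      · intro _
        refine IsPath.nil.cons ?_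
        simp [h.ne]
    · obtain ⟨y, q', hy, hsub, hfirst, hpath⟩ := ih hm hb
      refine ⟨y, Walk.cons h q', hy, ?_, ?_, ?_⟩
      · intro z hz
        rw [support_cons, List.mem_cons] at hz ⊢
        rcases hz with rfl | hz
        · exact Or.inl rfl
        · exact Or.inr (hsub z hz)
      · intro z hz hzS
        rw [support_cons, List.mem_cons] at hz
        rcases hz with rfl | hz
        · exact absurd hzS ha
        · exact hfirst z hz hzS
      · intro hp
        have hp' := (cons_isPath_iff h q).mp hp
        refine (hpath hp'.1).cons ?_
        intro hmem
        exact hp'.2 (hsub a hmem)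

lemma exists_two_nbrs {W : Type*} {H : SimpleGraph W} (hconn : H.Preconnected)
    (x y z : W) (hxy : x ≠ y) (hxz : x ≠ z) (hyz : y ≠ z) :
    ∃ v a b : W, H.Adj v a ∧ H.Adj v b ∧ a ≠ b := by
  classical
  obtain ⟨p0⟩ := hconn y z
  obtain ⟨p, hp⟩ : ∃ p : H.Walk y z, p.IsPath := ⟨p0.toPath.1, p0.toPath.2⟩
  cases p with
  | nil => exact absurd rfl hyz
  | @cons _ m _ h q =>
    cases q with
    | nil => -- y adjacent z; use a path from x to y
      obtain ⟨q0⟩ := hconn x y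
      obtain ⟨q, hq⟩ : ∃ q : H.Walk x y, q.IsPath := ⟨q0.toPath.1, q0.toPath.2⟩
      cases q with
      | nil => exact absurd rfl hxy
      | @cons _ m' _ h' q' =>
        cases q' with
        | nil => -- x adjacent y
          exact ⟨y, x, z, h'.symm, h, hxz⟩
        | @cons _ t _ h'' q'' =>
          refine ⟨m', x, t, h'.symm, h'', ?_⟩
          intro hxt
          have hh := (cons_isPath_iff h' _).mp hq
          apply hh.2
          rw [hxt, support_cons]
          exact List.mem_cons_of_mem _ q''.start_mem_support
    | @cons _ t _ h' q' =>
      refine ⟨m, y, t, h.symm, h', ?_⟩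
      intro hyt
      have hh := (cons_isPath_iff h _).mp hp
      apply hh.2
      rw [hyt, support_cons]
      exact List.mem_cons_of_mem _ q'.start_mem_support

/-- Inclusion homomorphism from an induced subgraph. -/
def inclHom (B : Set V) : G.induce B →g G :=
  ⟨fun x => x.1, fun {a b} hab => hab⟩

lemma inclHom_inj (B : Set V) : Function.Injective (inclHom (G := G) B) :=
  fun _ _ h => Subtype.ext h

/-- Inclusion homomorphism between induced subgraphs. -/
def inclHom2 {A B : Set V} (hAB : A ⊆ B) : G.induce A →g G.induce B :=
  ⟨fun x => ⟨x.1, hAB x.2⟩, fun {a b} hab => hab⟩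

lemma inclHom2_inj {A B : Set V} (hAB : A ⊆ B) :
    Function.Injective (inclHom2 (G := G) hAB) := by
  intro x y h
  apply Subtype.ext
  have h2 := congrArg Subtype.val h
  exact h2

lemma path_avoid {B : Set V} {w : V}
    (hconn : (G.induce (B \ {w})).Connected) {a b : ↥B}
    (ha : (a : V) ∈ B \ {w}) (hb : (b : V) ∈ B \ {w}) :
    ∃ P : (G.induce B).Walk a b, P.IsPath ∧ ∀ z ∈ P.support, (z : V) ≠ w := by
  classical
  obtain ⟨p0⟩ := hconn.preconnected ⟨(a : V), ha⟩ ⟨(b : V), hb⟩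
  obtain ⟨p, hp⟩ : ∃ p : (G.induce (B \ {w})).Walk ⟨(a : V), ha⟩ ⟨(b : V), hb⟩, p.IsPath :=
    ⟨p0.toPath.1, p0.toPath.2⟩
  have hsub : B \ {w} ⊆ B := Set.diff_subset
  let j := inclHom2 (G := G) hsub
  have hja : j ⟨(a : V), ha⟩ = a := Subtype.ext rfl
  have hjb : j ⟨(b : V), hb⟩ = b := Subtype.ext rfl
  refine ⟨(p.map j).copy hja hjb, ?_, ?_⟩
  · rw [isPath_copy]
    exact p.map_isPath_of_injective (inclHom2_inj hsub) hp
  · intro z hz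
    rw [support_copy, Walk.support_map] at hz
    obtain ⟨x, _, rfl⟩ := List.mem_map.mp hz
    exact fun hzw => x.2.2 (by exact hzw)

lemma adj_of_walk_pair {B : Set V} {x y : V} (hxy : x ≠ y) :
    ∀ {a b : ↥B} (_p : (G.induce B).Walk a b), (a : V) = x → (b : V) = y →
    (∀ c : ↥B, (c : V) = x ∨ (c : V) = y) → G.Adj x y := by
  intro a b p
  induction p with
  | nil =>
    intro h1 h2 _
    exact absurd (h1 ▸ h2) hxy
  | @cons a m b hadj q ih =>
    intro h1 h2 hpair
    rcases hpair m with hm | hm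
    · exact ih hm h2 hpair
    · have : G.Adj (a : V) (m : V) := hadj
      rwa [h1, hm] at this

end Helpers

/-- In a graph with no even cycle, every block is a single vertex, a single edge,
or an odd cycle. -/
theorem stmt_15 {V : Type*} (G : SimpleGraph V)
    (h : ∀ (u : V) (c : G.Walk u u), c.IsCycle → ¬ Even c.length)
    (B : Set V) (hB : IsBlock G B) :
    (∃ v : V, B = {v}) ∨
    (∃ u v : V, u ≠ v ∧ G.Adj u v ∧ B = {u, v}) ∨
    (∃ (a : V) (c : G.Walk a a), c.IsCycle ∧ Odd c.length ∧
      B = {v : V | v ∈ c.support} ∧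
      ∀ e ∈ G.edgeSet, (∀ v ∈ e, v ∈ B) → e ∈ c.edges) := by
  classical
  open SimpleGraph.Walk in
  obtain ⟨⟨hBconn, hBcut⟩, -⟩ := hB
  obtain ⟨x0⟩ : Nonempty ↥B := hBconn.nonempty
  by_cases h1 : ∀ b ∈ B, b = (x0 : V)
  · exact Or.inl ⟨(x0 : V), Set.eq_singleton_iff_unique_mem.mpr ⟨x0.2, h1⟩⟩
  push_neg at h1
  obtain ⟨y0, hy0B, hy0ne⟩ := h1
  by_cases h2 : ∀ b ∈ B, b = (x0 : V) ∨ b = y0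
  · refine Or.inr (Or.inl ⟨(x0 : V), y0, Ne.symm hy0ne, ?_, ?_⟩)
    · obtain ⟨p⟩ := hBconn.preconnected x0 ⟨y0, hy0B⟩
      exact adj_of_walk_pair (Ne.symm hy0ne) p rfl rfl (fun c => h2 (c : V) c.2)
    · apply Set.eq_of_subset_of_subset
      · intro t ht
        rcases h2 t ht with rfl | rfl
        · exact Set.mem_insert _ _
        · exact Set.mem_insert_of_mem _ rfl
      · intro t ht
        rcases ht with rfl | ht
        · exact x0.2
        · rw [Set.mem_singleton_iff] at ht; subst ht; exact hy0B
  push_neg at h2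
  obtain ⟨z0, hz0B, hz0x, hz0y⟩ := h2
  refine Or.inr (Or.inr ?_)
  set H := G.induce B with hHdef
  have hpre : H.Preconnected := hBconn.preconnected
  have hι : Function.Injective (inclHom (G := G) B) := inclHom_inj B
  have hodd : ∀ (u : ↥B) (c : H.Walk u u), c.IsCycle → Odd c.length := by
    intro u c hc
    have hc' : (c.map (inclHom (G := G) B)).IsCycle := hc.map hι
    have hne := h _ _ hc'
    rw [Walk.length_map] at hne
    exact Nat.not_even_iff_odd.mp hne
  -- three distinct vertices of B
  have hxy' : x0 ≠ (⟨y0, hy0B⟩ : ↥B) := fun he => hy0ne (congrArg Subtype.val he).symm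
  have hxz' : x0 ≠ (⟨z0, hz0B⟩ : ↥B) := fun he => hz0x (congrArg Subtype.val he).symm
  have hyz' : (⟨y0, hy0B⟩ : ↥B) ≠ (⟨z0, hz0B⟩ : ↥B) :=
    fun he => hz0y (congrArg Subtype.val he).symm
  obtain ⟨v, a, b, hva, hvb, hab⟩ := exists_two_nbrs hpre x0 ⟨y0, hy0B⟩ ⟨z0, hz0B⟩ hxy' hxz' hyz'
  have hvaG : G.Adj (v : V) (a : V) := hva
  have hvbG : G.Adj (v : V) (b : V) := hvb
  have hav : (a : V) ∈ B \ {(v : V)} := ⟨a.2, fun hh => hvaG.ne' (by simpa using hh)⟩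
  have hbv : (b : V) ∈ B \ {(v : V)} := ⟨b.2, fun hh => hvbG.ne' (by simpa using hh)⟩
  have hconn1 : (G.induce (B \ {(v : V)})).Connected :=
    hBcut (v : V) v.2 ⟨(a : V), hav⟩
  obtain ⟨P, hPpath, hPavoid⟩ := path_avoid hconn1 hav hbv
  have hvP : v ∉ P.support := fun hm => hPavoid v hm rfl
  have hinner : (Walk.cons hva P).IsPath := hPpath.cons hvP
  have hCedge : s(b, v) ∉ (Walk.cons hva P).edges := by
    rw [Walk.edges_cons, List.mem_cons]
    rintro (he | he)
    · rw [Sym2.eq_iff] at he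
      rcases he with ⟨he1, he2⟩ | ⟨he1, he2⟩
      · exact hvb.ne' he1
      · exact hab (he1.symm ▸ rfl)
    · exact hvP (by
        have := P.fst_mem_support_of_mem_edges (by rwa [Sym2.eq_swap] at he)
        exact this)
  set C : H.Walk b b := Walk.cons hvb.symm (Walk.cons hva P) with hCdef
  have hCcyc : C.IsCycle := (Walk.cons_isCycle_iff _ _).mpr ⟨hinner, hCedge⟩
  have hCodd : Odd C.length := hodd b C hCcyc
  -- Claim A : every H-edge between support vertices of C is an edge of C
  have hchord : ∀ (s t : ↥B), H.Adj s t → s ∈ C.support → t ∈ C.support →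
      s(s, t) ∈ C.edges := by
    intro s t hadj hsC htC
    by_contra hno
    obtain ⟨P1, P2, hP1p, hP2p, hlen12, hE1, hE2, _, _, _⟩ :=
      exists_arcs hCcyc hsC htC hadj.ne
    have hc1 : (Walk.cons hadj.symm P1).IsCycle := by
      rw [Walk.cons_isCycle_iff]
      refine ⟨hP1p, fun hm => hno ?_⟩
      rw [Sym2.eq_swap]
      exact hE1 _ hm
    have hc2 : (Walk.cons hadj P2).IsCycle := by
      rw [Walk.cons_isCycle_iff]
      refine ⟨hP2p, fun hm => hno (hE2 _ hm)⟩
    have ho1 := hodd _ _ hc1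
    have ho2 := hodd _ _ hc2
    rw [Walk.length_cons] at ho1 ho2
    rw [Nat.odd_iff] at ho1 ho2 hCodd
    omega
  -- Claim B : every vertex of B is on C
  have hall : ∀ w : ↥B, w ∈ C.support := by
    by_contra hnot
    push_neg at hnot
    obtain ⟨w, hw⟩ := hnot
    set S : Set ↥B := {z : ↥B | z ∈ C.support} with hSdef
    obtain ⟨p⟩ := hpre b w
    obtain ⟨u, vv, huv, huS, hvvS⟩ :=
      walk_cross S p (by exact C.start_mem_support) hw
    have huvG : G.Adj (u : V) (vv : V) := huv
    have huC : u ∈ C.support := huS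
    -- find another vertex of C distinct from u
    have h3 := hCcyc.three_le_length
    have hy1 : ∃ y1 : ↥B, y1 ∈ C.support ∧ y1 ≠ u := by
      have hnodup := hCcyc.support_nodup
      have hlen : 2 ≤ C.support.tail.length := by
        have hls := C.length_support
        have h4 : C.support.tail.length = C.support.length - 1 := List.length_tail
        omega
      match hmatch : C.support.tail with
      | [] => rw [hmatch] at hlen; simp at hlen
      | [z] => rw [hmatch] at hlen; simp at hlen
      | z1 :: z2 :: rest =>
        rw [hmatch] at hnodup
        have hz12 : z1 ≠ z2 := by
          intro he
          rw [List.nodup_cons] at hnodup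
          exact hnodup.1 (he ▸ List.mem_cons_self)
        have hz1C : z1 ∈ C.support := by
          apply List.mem_of_mem_tail; rw [hmatch]; simp
        have hz2C : z2 ∈ C.support := by
          apply List.mem_of_mem_tail; rw [hmatch]; simp
        by_cases hz1u : z1 = u
        · exact ⟨z2, hz2C, fun he => hz12 (hz1u.trans he.symm)⟩
        · exact ⟨z1, hz1C, hz1u⟩
    obtain ⟨y1, hy1C, hy1u⟩ := hy1
    have hvvu : (vv : V) ≠ (u : V) := fun he => hvvS (by
      rw [hSdef]
      have : vv = u := Subtype.ext he
      rw [this]; exact huC)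
    have hy1uV : (y1 : V) ≠ (u : V) := fun he => hy1u (Subtype.ext he)
    have hconn2 : (G.induce (B \ {(u : V)})).Connected :=
      hBcut (u : V) u.2 ⟨(vv : V), ⟨vv.2, hvvu⟩⟩
    obtain ⟨Q, hQpath, hQavoid⟩ := path_avoid hconn2 ⟨vv.2, hvvu⟩ ⟨y1.2, hy1uV⟩
    obtain ⟨y, q, hyS, hqsub, hqfirst, hqpathf⟩ := walk_firsthit S Q hvvS hy1C
    have hqpath := hqpathf hQpath
    have huq : u ∉ q.support := fun hm => hQavoid u (hqsub u hm) rfl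
    have hyu : y ≠ u := fun he => huq (he ▸ q.end_mem_support)
    have hEpath : (Walk.cons huv q).IsPath := hqpath.cons huq
    have hqlen : 1 ≤ q.length :=
      walk_length_pos_of_ne q (fun he => hvvS (he ▸ hyS))
    have hyC : y ∈ C.support := hyS
    obtain ⟨P1, P2, hP1p, hP2p, hlen12, hE1, hE2, hS1, hS2, hI⟩ :=
      exists_arcs hCcyc huC hyC (fun he => hyu he.symm)
    have hdisj1 : ∀ z, z ∈ (Walk.cons huv q).support → z ∈ P1.support →
        z = u ∨ z = y := by
      intro z hz hzP
      rw [Walk.support_cons, List.mem_cons] at hz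
      rcases hz with rfl | hz
      · exact Or.inl rfl
      · exact Or.inr (hqfirst z hz (hS1 z hzP))
    have hdisj2 : ∀ z, z ∈ (Walk.cons huv q).support → z ∈ P2.reverse.support →
        z = u ∨ z = y := by
      intro z hz hzP
      rw [Walk.support_reverse, List.mem_reverse] at hzP
      rw [Walk.support_cons, List.mem_cons] at hz
      rcases hz with rfl | hz
      · exact Or.inl rfl
      · rcases hqfirst z hz (hS2 z hzP) with he
        exact Or.inr he
    have hlenE : (Walk.cons huv q).length = q.length + 1 := Walk.length_cons _ _
    have hl1 : 1 ≤ P1.length := walk_length_pos_of_ne P1 (fun he => hyu he.symm)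
    have hl2 : 1 ≤ P2.length := walk_length_pos_of_ne P2 hyu
    have hcy1 : ((Walk.cons huv q).append P1.reverse).IsCycle :=
      append_reverse_isCycle hEpath hP1p (fun he => hyu he.symm) hdisj1 (by omega)
    have hcy2 : ((Walk.cons huv q).append P2.reverse.reverse).IsCycle :=
      append_reverse_isCycle hEpath hP2p.reverse (fun he => hyu he.symm) hdisj2
        (by rw [Walk.length_reverse]; omega)
    have ho1 := hodd _ _ hcy1
    have ho2 := hodd _ _ hcy2
    rw [Walk.length_append, Walk.length_reverse, hlenE] at ho1
    rw [Walk.length_append, Walk.length_reverse, Walk.length_reverse, hlenE] at ho2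
    rw [Nat.odd_iff] at ho1 ho2 hCodd
    omega
  -- Conclusion
  refine ⟨inclHom (G := G) B b, C.map (inclHom (G := G) B), hCcyc.map hι, ?_, ?_, ?_⟩
  · rw [Walk.length_map]; exact hCodd
  · ext t
    simp only [Set.mem_setOf_eq, Walk.support_map, List.mem_map]
    constructor
    · intro ht
      exact ⟨⟨t, ht⟩, hall ⟨t, ht⟩, rfl⟩
    · rintro ⟨s, _, rfl⟩
      exact s.2
  · intro e he hend
    induction e using Sym2.ind with
    | _ s t =>
      have hadjG : G.Adj s t := G.mem_edgeSet.mp he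
      have hsB : s ∈ B := hend s (Sym2.mem_mk_left s t)
      have htB : t ∈ B := hend t (Sym2.mem_mk_right s t)
      have hadjH : H.Adj ⟨s, hsB⟩ ⟨t, htB⟩ := hadjG
      have hmem := hchord ⟨s, hsB⟩ ⟨t, htB⟩ hadjH (hall _) (hall _)
      rw [Walk.edges_map]
      refine List.mem_map.mpr ⟨s(⟨s, hsB⟩, ⟨t, htB⟩), hmem, ?_⟩
      rfl
end
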